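/- arXiv:2106.07772 — 9 statements merged into one kernel-verified Lean document; each statement's English description precedes it below -/
import Mathlib

section
/- Let r ≥ 3 be even and k ≥ 1 odd. Then the (r+k−1)-regular graph on r+k+1 vertices (the complete graph K_{r+k+1} minus a perfect matching) is (K_{1,r}; k)-vertex stable. -/
/-- The star graph `K_{1,r}`: center `none`, leaves `some i`. -/
def starG (r : ℕ) : SimpleGraph (Option (Fin r)) where
  Adj a b := a ≠ b ∧ (a = none ∨ b = none)
  symm := ⟨fun a b h => ⟨h.1.symm, h.2.symm⟩⟩
  loopless := ⟨fun a h => h.1 rfl⟩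

/-- The join `K_{k+1} * \bar K_r`: clique part `Sum.inl`, independent part `Sum.inr`. -/
def joinKE (k r : ℕ) : SimpleGraph (Fin (k + 1) ⊕ Fin r) where
  Adj a b := a ≠ b ∧ (a.isLeft ∨ b.isLeft)
  symm := ⟨fun a b h => ⟨h.1.symm, h.2.symm⟩⟩
  loopless := ⟨fun a h => h.1 rfl⟩

/-- The complete graph on `n` vertices minus a perfect matching (vertices `2m`, `2m+1` paired). -/
def compMM (n : ℕ) : SimpleGraph (Fin n) where
  Adj i j := (i : ℕ) / 2 ≠ (j : ℕ) / 2
  symm := ⟨fun i j h => h.symm⟩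
  loopless := ⟨fun i h => h rfl⟩

/-- `G` contains a subgraph isomorphic to `H`. -/
def ContainsIso {α β : Type*} (H : SimpleGraph α) (G : SimpleGraph β) : Prop :=
  ∃ f : α → β, Function.Injective f ∧ ∀ a b, H.Adj a b → G.Adj (f a) (f b)

/-- `G` is `(H; k)`-vertex stable: after deleting any `k` vertices, a copy of `H` remains. -/
def VertexStable {α β : Type*} (H : SimpleGraph α) (k : ℕ) (G : SimpleGraph β) : Prop :=
  ∀ F : Finset β, F.card = k →
    ∃ f : α → β, Function.Injective f ∧ (∀ a, f a ∉ F) ∧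
      ∀ a b, H.Adj a b → G.Adj (f a) (f b)

theorem stmt_5 (r k : ℕ) (hr : 3 ≤ r) (hre : Even r) (hk : 1 ≤ k) (hko : Odd k) :
    VertexStable (starG r) k (compMM (r + k + 1)) := by
  classical
  intro F hF
  set S : Finset (Fin (r+k+1)) := Fᶜ with hSdef
  have hS : S.card = r + 1 := by
    rw [hSdef, Finset.card_compl, hF]
    simp only [Fintype.card_fin]
    omega
  have hc : ∃ c ∈ S, ∀ l ∈ S, (l:ℕ)/2 = (c:ℕ)/2 → l = c := by
    by_contra hcon
    push_neg at hcon
    have hfib : ∀ m ∈ S.image (fun i : Fin (r+k+1) => (i:ℕ)/2),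
        (S.filter (fun i : Fin (r+k+1) => (i:ℕ)/2 = m)).card = 2 := by
      intro m hm
      obtain ⟨c, hcS, hcm⟩ := Finset.mem_image.mp hm
      obtain ⟨l, hlS, hl2, hlne⟩ := hcon c hcS
      have hlc : (l:ℕ) ≠ (c:ℕ) := fun h => hlne (Fin.ext h)
      have heq : S.filter (fun i : Fin (r+k+1) => (i:ℕ)/2 = m) = ({c, l} : Finset (Fin (r+k+1))) := by
        ext x
        simp only [Finset.mem_filter, Finset.mem_insert, Finset.mem_singleton]
        constructor
        · rintro ⟨hxS, hxm⟩
          have : (x:ℕ) = (c:ℕ) ∨ (x:ℕ) = (l:ℕ) := by omega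
          rcases this with h | h
          · exact Or.inl (Fin.ext h)
          · exact Or.inr (Fin.ext h)
        · rintro (rfl | rfl)
          · exact ⟨hcS, hcm⟩
          · exact ⟨hlS, by omega⟩
      rw [heq, Finset.card_insert_of_notMem (by simpa using hlne.symm),
        Finset.card_singleton]
    have hsum := Finset.card_eq_sum_card_fiberwise
      (f := fun i : Fin (r+k+1) => (i:ℕ)/2) (s := S)
      (t := S.image (fun i : Fin (r+k+1) => (i:ℕ)/2))
      (fun x hx => Finset.mem_image_of_mem _ hx)
    rw [Finset.sum_congr rfl hfib, Finset.sum_const, smul_eq_mul] at hsum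
    obtain ⟨a, ha⟩ := hre
    omega
  obtain ⟨c, hcS, hcu⟩ := hc
  set L := S.erase c with hLdef
  have hLcard : L.card = r := by
    rw [hLdef, Finset.card_erase_of_mem hcS, hS]
    omega
  let e := L.orderIsoOfFin hLcard
  have heL : ∀ i, (e i : Fin (r+k+1)) ∈ L := fun i => (e i).2
  have heS : ∀ i, (e i : Fin (r+k+1)) ∈ S := fun i => Finset.mem_of_mem_erase (heL i)
  have hec : ∀ i, (e i : Fin (r+k+1)) ≠ c := fun i => (Finset.mem_erase.mp (heL i)).1
  have hdiv : ∀ i, ((e i : Fin (r+k+1)) : ℕ)/2 ≠ (c:ℕ)/2 := fun i h =>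
    hec i (hcu _ (heS i) h)
  refine ⟨fun a => a.elim c (fun i => (e i : Fin (r+k+1))), ?_, ?_, ?_⟩
  · intro a b hab
    clear_value e
    match a, b with
    | none, none => rfl
    | none, some j => exact absurd hab.symm (hec j)
    | some i, none => exact absurd hab (hec i)
    | some i, some j =>
      have : e i = e j := Subtype.ext hab
      exact congrArg some (e.injective this)
  · intro a
    match a with
    | none => exact Finset.mem_compl.mp hcS
    | some i => exact Finset.mem_compl.mp (heS i)
  · rintro a b ⟨hne, hor⟩
    match a, b with
    | none, none => exact absurd rfl hne
    | none, some j => exact (hdiv j ·.symm)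
    | some i, none => exact hdiv i
    | some i, some j => simp [starG] at hor
end

section
/- Let r ≥ 3, k ≥ 0, and let G be a graph of order r+k+1 with maximum degree Δ(G) < r+k. If r is odd or k is even, then G is not (K_{1,r}; k)-vertex stable. -/
section CoreAux

variable {V : Type*} [Fintype V] [DecidableEq V] (R : V → V → Prop)

/-- A matching with respect to a relation `R`: a finite set of `R`-edges with
pairwise distinct endpoints. -/
def isMatch (M : Finset (V × V)) : Prop :=
  (∀ p ∈ M, R p.1 p.2) ∧ ∀ p ∈ M, ∀ q ∈ M, p ≠ q →
    p.1 ≠ q.1 ∧ p.1 ≠ q.2 ∧ p.2 ≠ q.1 ∧ p.2 ≠ q.2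

/-- The vertex set of a matching. -/
def mverts (M : Finset (V × V)) : Finset V := M.image Prod.fst ∪ M.image Prod.snd

lemma mem_mverts {M : Finset (V × V)} {v : V} :
    v ∈ mverts M ↔ ∃ p ∈ M, p.1 = v ∨ p.2 = v := by
  simp only [mverts, Finset.mem_union, Finset.mem_image]
  constructor
  · rintro (⟨p, hp, h⟩ | ⟨p, hp, h⟩)
    · exact ⟨p, hp, Or.inl h⟩
    · exact ⟨p, hp, Or.inr h⟩
  · rintro ⟨p, hp, h | h⟩
    · exact Or.inl ⟨p, hp, h⟩
    · exact Or.inr ⟨p, hp, h⟩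

lemma card_mverts (hne : ∀ v w, R v w → v ≠ w) {M : Finset (V × V)} (hM : isMatch R M) :
    (mverts M).card = 2 * M.card := by
  have hdisj : Disjoint (M.image Prod.fst) (M.image Prod.snd) := by
    rw [Finset.disjoint_left]
    rintro x hx1 hx2
    simp only [Finset.mem_image] at hx1 hx2
    obtain ⟨p, hp, hpx⟩ := hx1
    obtain ⟨q, hq, hqx⟩ := hx2
    by_cases hpq : p = q
    · subst hpq; exact hne _ _ (hM.1 p hp) (hpx.trans hqx.symm)
    · exact (hM.2 p hp q hq hpq).2.1 (hpx.trans hqx.symm)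
  rw [mverts, Finset.card_union_of_disjoint hdisj,
    Finset.card_image_of_injOn, Finset.card_image_of_injOn, two_mul]
  · intro p hp q hq h
    by_contra hpq
    exact (hM.2 p hp q hq hpq).2.2.2 h
  · intro p hp q hq h
    by_contra hpq
    exact (hM.2 p hp q hq hpq).1 h

lemma mverts_partner (hsymm : Symmetric R) {M : Finset (V × V)} (hM : isMatch R M)
    {v : V} (hv : v ∈ mverts M) : ∃ w ∈ mverts M, R v w := by
  rw [mem_mverts] at hv
  obtain ⟨p, hp, h | h⟩ := hv
  · exact ⟨p.2, mem_mverts.2 ⟨p, hp, Or.inr rfl⟩, h ▸ hM.1 p hp⟩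
  · exact ⟨p.1, mem_mverts.2 ⟨p, hp, Or.inl rfl⟩, hsymm (h ▸ hM.1 p hp)⟩

lemma isMatch_subset {M M' : Finset (V × V)} (h : M' ⊆ M) (hM : isMatch R M) :
    isMatch R M' :=
  ⟨fun p hp => hM.1 p (h hp), fun p hp q hq => hM.2 p (h hp) q (h hq)⟩

lemma mverts_mono {M M' : Finset (V × V)} (h : M' ⊆ M) : mverts M' ⊆ mverts M :=
  Finset.union_subset_union (Finset.image_subset_image h) (Finset.image_subset_image h)

/-- The key combinatorial lemma: if every vertex has an `R`-partner and `s` has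
appropriate parity, there is an `s`-element set in which every vertex has an
`R`-partner inside the set. -/
lemma core_lemma (hsymm : Symmetric R) (hne : ∀ v w, R v w → v ≠ w)
    (hmin : ∀ v : V, ∃ w, R v w) (s : ℕ) (hs2 : 2 ≤ s) (hsn : s ≤ Fintype.card V)
    (hpar : Even s ∨ Odd (Fintype.card V)) :
    ∃ S : Finset V, S.card = s ∧ ∀ v ∈ S, ∃ w ∈ S, R v w := by
  classical
  obtain ⟨M, hMmem, hMmax⟩ := Finset.exists_max_image
    ((Finset.univ : Finset (Finset (V × V))).filter (fun M => isMatch R M)) Finset.card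
    ⟨∅, by simp [isMatch]⟩
  rw [Finset.mem_filter] at hMmem
  have hM : isMatch R M := hMmem.2
  have hMmax' : ∀ M', isMatch R M' → M'.card ≤ M.card := fun M' h =>
    hMmax M' (Finset.mem_filter.2 ⟨Finset.mem_univ _, h⟩)
  -- maximality: no R-edge between unmatched vertices
  have hout : ∀ u w, u ∉ mverts M → w ∉ mverts M → ¬ R u w := by
    intro u w hu hw hR
    have hnotmem : (u, w) ∉ M := fun h => hu (mem_mverts.2 ⟨(u, w), h, Or.inl rfl⟩)
    have hfst : ∀ q ∈ M, u ≠ q.1 ∧ u ≠ q.2 := by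
      intro q hq
      constructor <;> intro h
      · exact hu (mem_mverts.2 ⟨q, hq, Or.inl h.symm⟩)
      · exact hu (mem_mverts.2 ⟨q, hq, Or.inr h.symm⟩)
    have hsnd : ∀ q ∈ M, w ≠ q.1 ∧ w ≠ q.2 := by
      intro q hq
      constructor <;> intro h
      · exact hw (mem_mverts.2 ⟨q, hq, Or.inl h.symm⟩)
      · exact hw (mem_mverts.2 ⟨q, hq, Or.inr h.symm⟩)
    have hM' : isMatch R (insert (u, w) M) := by
      constructor
      · intro p hp
        rcases Finset.mem_insert.1 hp with h | h
        · subst h; exact hR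
        · exact hM.1 p h
      · intro p hp q hq hpq
        rcases Finset.mem_insert.1 hp with h1 | h1 <;> rcases Finset.mem_insert.1 hq with h2 | h2
        · exact absurd (h1.trans h2.symm) hpq
        · subst h1
          exact ⟨(hfst q h2).1, (hfst q h2).2, (hsnd q h2).1, (hsnd q h2).2⟩
        · subst h2
          exact ⟨Ne.symm (hfst p h1).1, Ne.symm (hsnd p h1).1,
            Ne.symm (hfst p h1).2, Ne.symm (hsnd p h1).2⟩
        · exact hM.2 p h1 q h2 hpq
    have hle := hMmax' _ hM'
    rw [Finset.card_insert_of_notMem hnotmem] at hle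
    omega
  have hcard2m : (mverts M).card = 2 * M.card := card_mverts R hne hM
  have h2mn : 2 * M.card ≤ Fintype.card V := by
    rw [← hcard2m]; simpa using Finset.card_le_univ (mverts M)
  by_cases hcase : 2 * M.card ≤ s
  · -- take all matched vertices plus unmatched extras
    have hUcard : (Finset.univ \ mverts M).card = Fintype.card V - 2 * M.card := by
      rw [Finset.card_sdiff_of_subset (Finset.subset_univ _), hcard2m, Finset.card_univ]
    obtain ⟨U', hU'sub, hU'card⟩ := Finset.exists_subset_card_eq
      (show s - 2 * M.card ≤ (Finset.univ \ mverts M).card by omega)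
    have hdisj : Disjoint (mverts M) U' :=
      Finset.disjoint_left.2 fun x hx hx' => (Finset.mem_sdiff.1 (hU'sub hx')).2 hx
    refine ⟨mverts M ∪ U', ?_, ?_⟩
    · rw [Finset.card_union_of_disjoint hdisj, hcard2m, hU'card]; omega
    · intro v hv
      rcases Finset.mem_union.1 hv with h | h
      · obtain ⟨w, hw, hRw⟩ := mverts_partner R hsymm hM h
        exact ⟨w, Finset.mem_union_left _ hw, hRw⟩
      · obtain ⟨w, hRw⟩ := hmin v
        have hv' : v ∉ mverts M := (Finset.mem_sdiff.1 (hU'sub h)).2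
        have hw : w ∈ mverts M := by
          by_contra hwc
          exact hout v w hv' hwc hRw
        exact ⟨w, Finset.mem_union_left _ hw, hRw⟩
  · by_cases hse : Even s
    · -- even case: take s/2 matching edges
      obtain ⟨t, ht⟩ := hse
      obtain ⟨M', hM'sub, hM'card⟩ := Finset.exists_subset_card_eq
        (show t ≤ M.card by omega)
      have hM'match := isMatch_subset R hM'sub hM
      refine ⟨mverts M', ?_, ?_⟩
      · rw [card_mverts R hne hM'match, hM'card]; omega
      · intro v hv
        exact mverts_partner R hsymm hM'match hv
    · -- odd case: one unmatched vertex plus (s-1)/2 edges, one covering its partner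
      have hodd : Odd (Fintype.card V) := hpar.resolve_left hse
      have hsmod : s % 2 = 1 := Nat.not_even_iff.1 hse
      have hUne : (Finset.univ \ mverts M).Nonempty := by
        rw [← Finset.card_pos, Finset.card_sdiff_of_subset (Finset.subset_univ _), hcard2m,
          Finset.card_univ]
        obtain ⟨t, ht⟩ := hodd
        omega
      obtain ⟨u, hu⟩ := hUne
      have hu' : u ∉ mverts M := (Finset.mem_sdiff.1 hu).2
      obtain ⟨w, hRw⟩ := hmin u
      have hw : w ∈ mverts M := by
        by_contra hwc
        exact hout u w hu' hwc hRw
      obtain ⟨p, hp, hpw⟩ := mem_mverts.1 hw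
      obtain ⟨M'', hM''sub, hM''card⟩ := Finset.exists_subset_card_eq
        (show (s - 1) / 2 - 1 ≤ (M.erase p).card by
          rw [Finset.card_erase_of_mem hp]; omega)
      have hM'sub : insert p M'' ⊆ M := by
        intro q hq
        rcases Finset.mem_insert.1 hq with h | h
        · exact h ▸ hp
        · exact Finset.erase_subset _ _ (hM''sub h)
      have hM'match := isMatch_subset R hM'sub hM
      have hpnot : p ∉ M'' := fun h => (Finset.mem_erase.1 (hM''sub h)).1 rfl
      have hM'card : (insert p M'').card = (s - 1) / 2 := by
        rw [Finset.card_insert_of_notMem hpnot, hM''card]; omega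
      have hune : u ∉ mverts (insert p M'') := fun h => hu' (mverts_mono (h := hM'sub) h)
      refine ⟨insert u (mverts (insert p M'')), ?_, ?_⟩
      · rw [Finset.card_insert_of_notMem hune, card_mverts R hne hM'match, hM'card]
        omega
      · intro v hv
        rcases Finset.mem_insert.1 hv with h | h
        · subst h
          have hwM' : w ∈ mverts (insert p M'') :=
            mem_mverts.2 ⟨p, Finset.mem_insert_self p M'', hpw⟩
          exact ⟨w, Finset.mem_insert_of_mem hwM', hRw⟩
        · obtain ⟨x, hx, hRx⟩ := mverts_partner R hsymm hM'match h
          exact ⟨x, Finset.mem_insert_of_mem hx, hRx⟩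

end CoreAux

theorem stmt_6 {V : Type*} [Fintype V] (G : SimpleGraph V) (r k : ℕ)
    (hr : 3 ≤ r) (hcard : Fintype.card V = r + k + 1)
    (hdeg : ∀ v : V, (G.neighborSet v).ncard < r + k)
    (hpar : Odd r ∨ Even k) :
    ¬ VertexStable (starG r) k G := by
  classical
  intro hstab
  set R : V → V → Prop := fun v w => v ≠ w ∧ ¬ G.Adj v w with hRdef
  have hsymm : Symmetric R := fun v w h => ⟨h.1.symm, fun a => h.2 a.symm⟩
  have hne : ∀ v w, R v w → v ≠ w := fun v w h => h.1
  have hmin : ∀ v : V, ∃ w, R v w := by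
    intro v
    by_contra hcon
    push_neg at hcon
    simp only [hRdef, not_and, not_not] at hcon
    have hsub : ({v}ᶜ : Set V) ⊆ G.neighborSet v := by
      intro w hw
      have hvw : v ≠ w := fun h => hw (by simp [h])
      exact hcon w hvw
    have h1 : ({v}ᶜ : Set V).ncard ≤ (G.neighborSet v).ncard :=
      Set.ncard_le_ncard hsub (Set.toFinite _)
    have h2 : ({v}ᶜ : Set V).ncard = Fintype.card V - 1 := by
      rw [Set.ncard_eq_toFinset_card']
      simp [Finset.card_compl]
    have h3 := hdeg v
    rw [h2, hcard] at h1
    omega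
  have hpar' : Even (r + 1) ∨ Odd (Fintype.card V) := by
    rcases hpar with ⟨t, ht⟩ | ⟨t, ht⟩
    · exact Or.inl ⟨t + 1, by omega⟩
    · rcases Nat.even_or_odd r with ⟨u, hu⟩ | ⟨u, hu⟩
      · exact Or.inr ⟨u + t, by omega⟩
      · exact Or.inl ⟨u + 1, by omega⟩
  obtain ⟨S, hScard, hSprop⟩ := core_lemma R hsymm hne hmin (r + 1) (by omega)
    (by omega) hpar'
  have hF : Sᶜ.card = k := by
    rw [Finset.card_compl, hScard, hcard]; omega
  obtain ⟨f, hfinj, hfF, hfadj⟩ := hstab Sᶜ hF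
  have hfS : ∀ a, f a ∈ S := fun a => by
    have := hfF a
    simpa using this
  have himg : Finset.univ.image f = S := by
    apply Finset.eq_of_subset_of_card_le
    · intro x hx
      obtain ⟨a, _, rfl⟩ := Finset.mem_image.1 hx
      exact hfS a
    · rw [Finset.card_image_of_injective _ hfinj, Finset.card_univ, hScard]
      simp
  obtain ⟨w, hwS, hw⟩ := hSprop (f none) (hfS none)
  rw [← himg] at hwS
  obtain ⟨a, -, rfl⟩ := Finset.mem_image.1 hwS
  cases a with
  | none => exact hw.1 rfl
  | some i => exact hw.2 (hfadj none (some i) (show (none : Option (Fin r)) ≠ some i ∧ ((none : Option (Fin r)) = none ∨ some i = none) from ⟨by simp, Or.inl rfl⟩))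
end

section
/- Let r ≥ 3, k ≥ 0, and let G be a graph of order r+k+1 with maximum degree Δ(G) < r+k that is (K_{1,r}; k)-vertex stable. Then r is even, k is odd, and G is isomorphic to the complete graph K_{r+k+1} minus a perfect matching (i.e., G is (r+k−1)-regular with every vertex having exactly one non-neighbour). -/
section StabHelpers
variable {V : Type*} [DecidableEq V] {B : V → V → Prop}

/-- every element of `S` has a `B`-neighbour inside `S` -/
def stabPP (B : V → V → Prop) (S : Finset V) : Prop := ∀ u ∈ S, ∃ w ∈ S, B u w

/-- there is a vertex with two `B`-neighbours inside `T` -/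
def stabTri (B : V → V → Prop) (T : Finset V) : Prop :=
  ∃ v ∈ T, ∃ a ∈ T, ∃ b ∈ T, a ≠ b ∧ B v a ∧ B v b

/-- one-regularity of `B` on `T` -/
def stabOneReg (B : V → V → Prop) (T : Finset V) : Prop :=
  ∀ u ∈ T, ∃ w, (w ∈ T ∧ B u w) ∧ ∀ y, (y ∈ T ∧ B u y) → y = w

lemma stab_removal (hs : ∀ u w, B u w → B w u)
    {S : Finset V} (hP : stabPP B S) {v a b : V} (hv : v ∈ S) (ha : a ∈ S) (hb : b ∈ S)
    (hab : a ≠ b) (hva : B v a) (hvb : B v b) :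
    ∃ x ∈ S, stabPP B (S.erase x) := by
  by_cases hA : stabPP B (S.erase a)
  · exact ⟨a, ha, hA⟩
  · unfold stabPP at hA
    push_neg at hA
    obtain ⟨y, hy, hyW⟩ := hA
    have hyS : y ∈ S := Finset.mem_of_mem_erase hy
    have hyv : y ≠ v := by
      intro h; subst h
      exact hyW b (Finset.mem_erase.2 ⟨hab.symm, hb⟩) hvb
    refine ⟨y, hyS, ?_⟩
    intro u hu
    have huS : u ∈ S := Finset.mem_of_mem_erase hu
    obtain ⟨w, hwS, hwB⟩ := hP u huS
    by_cases hwy : w = y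
    · subst hwy
      have : u = a := by
        by_contra hua
        exact hyW u (Finset.mem_erase.2 ⟨hua, huS⟩) (hs u w hwB)
      subst this
      exact ⟨v, Finset.mem_erase.2 ⟨hyv.symm, hv⟩, hs v u hva⟩
    · exact ⟨w, Finset.mem_erase.2 ⟨hwy, hwS⟩, hwB⟩

lemma stab_oneReg_of_noTri {T : Finset V} (hP : stabPP B T) (hT : ¬ stabTri B T) :
    stabOneReg B T := by
  intro u hu
  obtain ⟨w, hwT, hwB⟩ := hP u hu
  refine ⟨w, ⟨hwT, hwB⟩, ?_⟩
  rintro y ⟨hyT, hyB⟩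
  by_contra hne
  exact hT ⟨u, hu, y, hyT, w, hwT, hne, hyB, hwB⟩

lemma stab_oneReg_erase2 (hs : ∀ u w, B u w → B w u) {T : Finset V} (hreg : stabOneReg B T)
    {t w : V} (ht : t ∈ T) (hw : w ∈ T) (hB : B t w) :
    stabOneReg B ((T.erase t).erase w) := by
  intro u hu
  have huw : u ≠ w := Finset.ne_of_mem_erase hu
  have hut : u ≠ t := Finset.ne_of_mem_erase (Finset.mem_of_mem_erase hu)
  have huT : u ∈ T := Finset.mem_of_mem_erase (Finset.mem_of_mem_erase hu)
  obtain ⟨p, ⟨hpT, hpB⟩, hpU⟩ := hreg u huT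
  have hpt : p ≠ t := by
    intro h; subst h
    obtain ⟨q, ⟨hqT, hqB⟩, hqU⟩ := hreg p hpT
    have h1 := hqU u ⟨huT, hs u p hpB⟩
    have h2 := hqU w ⟨hw, hB⟩
    exact huw (h1.trans h2.symm)
  have hpw : p ≠ w := by
    intro h; subst h
    obtain ⟨q, ⟨hqT, hqB⟩, hqU⟩ := hreg p hpT
    have h1 := hqU u ⟨huT, hs u p hpB⟩
    have h2 := hqU t ⟨ht, hs t p hB⟩
    exact hut (h1.trans h2.symm)
  refine ⟨p, ⟨Finset.mem_erase.2 ⟨hpw, Finset.mem_erase.2 ⟨hpt, hpT⟩⟩, hpB⟩, ?_⟩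
  rintro y ⟨hyT, hyB⟩
  exact hpU y ⟨Finset.mem_of_mem_erase (Finset.mem_of_mem_erase hyT), hyB⟩

lemma stab_pairs (hs : ∀ u w, B u w → B w u) (hne : ∀ u w, B u w → u ≠ w) :
    ∀ (j : ℕ) (T : Finset V), stabOneReg B T → 2 * j ≤ T.card →
    ∃ E ⊆ T, E.card = 2 * j ∧ stabPP B E := by
  intro j
  induction j with
  | zero => intro T _ _; exact ⟨∅, Finset.empty_subset _, by simp, by intro u hu; simp at hu⟩
  | succ j ih =>
    intro T hreg hcard
    have hT0 : 0 < T.card := by omega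
    obtain ⟨t, ht⟩ := Finset.card_pos.1 hT0
    obtain ⟨w, ⟨hwT, hwB⟩, _⟩ := hreg t ht
    have htw : t ≠ w := hne t w hwB
    have hw1 : w ∈ T.erase t := Finset.mem_erase.2 ⟨htw.symm, hwT⟩
    have hc2 : ((T.erase t).erase w).card = T.card - 2 := by
      rw [Finset.card_erase_of_mem hw1, Finset.card_erase_of_mem ht]; omega
    have hreg'' := stab_oneReg_erase2 hs hreg ht hwT hwB
    obtain ⟨E', hE'sub, hE'card, hE'PP⟩ := ih ((T.erase t).erase w) hreg'' (by omega)
    have htE' : t ∉ E' := fun h => (Finset.ne_of_mem_erase (Finset.mem_of_mem_erase (hE'sub h))) rfl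
    have hwE' : w ∉ E' := fun h => (Finset.ne_of_mem_erase (hE'sub h)) rfl
    refine ⟨insert t (insert w E'), ?_, ?_, ?_⟩
    · intro x hx
      rcases Finset.mem_insert.1 hx with h | h
      · exact h ▸ ht
      rcases Finset.mem_insert.1 h with h | h
      · exact h ▸ hwT
      · exact Finset.mem_of_mem_erase (Finset.mem_of_mem_erase (hE'sub h))
    · rw [Finset.card_insert_of_notMem (by simp [htw, htE']),
        Finset.card_insert_of_notMem hwE', hE'card]
      ring
    · intro u hu
      rcases Finset.mem_insert.1 hu with h | h
      · exact ⟨w, by simp, h ▸ hwB⟩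
      rcases Finset.mem_insert.1 h with h | h
      · exact ⟨t, by simp, h ▸ hs t w hwB⟩
      · obtain ⟨w', hw'E, hw'B⟩ := hE'PP u h
        exact ⟨w', by simp [hw'E], hw'B⟩

lemma stab_lemA (hs : ∀ u w, B u w → B w u) (hne : ∀ u w, B u w → u ≠ w) :
    ∀ (N : ℕ) (T : Finset V), T.card ≤ N → stabPP B T → stabTri B T →
    ∀ m, 2 ≤ m → m ≤ T.card → ∃ E ⊆ T, E.card = m ∧ stabPP B E := by
  intro N
  induction N with
  | zero => intro T hC _ _ m hm hmc; omega
  | succ N ih =>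
    intro T hC hP hTri m hm hmc
    by_cases hme : m = T.card
    · exact ⟨T, Finset.Subset.refl _, hme.symm, hP⟩
    have hmlt : m < T.card := lt_of_le_of_ne hmc hme
    obtain ⟨v, hv, a, ha, b, hb, hab, hva, hvb⟩ := hTri
    obtain ⟨x, hx, hPx⟩ := stab_removal hs hP hv ha hb hab hva hvb
    set T' := T.erase x with hT'
    have hcT' : T'.card = T.card - 1 := Finset.card_erase_of_mem hx
    have hsub' : T' ⊆ T := Finset.erase_subset _ _
    by_cases hTri' : stabTri B T'
    · obtain ⟨E, h1, h2, h3⟩ := ih T' (by omega) hPx hTri' m hm (by omega)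
      exact ⟨E, h1.trans hsub', h2, h3⟩
    · have hreg' : stabOneReg B T' := stab_oneReg_of_noTri hPx hTri'
      rcases Nat.even_or_odd m with he | ho
      · obtain ⟨j, hj⟩ := he
        obtain ⟨E, h1, h2, h3⟩ := stab_pairs hs hne j T' hreg' (by omega)
        exact ⟨E, h1.trans hsub', by omega, h3⟩
      · obtain ⟨j, hj⟩ := ho
        have hj1 : 1 ≤ j := by omega
        obtain ⟨w, hwT, hwB⟩ := hP x hx
        have hwx : w ≠ x := (hne x w hwB).symm
        have hwT' : w ∈ T' := Finset.mem_erase.2 ⟨hwx, hwT⟩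
        obtain ⟨w', ⟨hw'T', hw'B⟩, hw'U⟩ := hreg' w hwT'
        have hww' : w ≠ w' := hne w w' hw'B
        have hw'x : w' ≠ x := Finset.ne_of_mem_erase hw'T'
        have hreg'' := stab_oneReg_erase2 hs hreg' hwT' hw'T' hw'B
        have hcT'' : ((T'.erase w).erase w').card = T'.card - 2 := by
          rw [Finset.card_erase_of_mem (Finset.mem_erase.2 ⟨hww'.symm, hw'T'⟩),
            Finset.card_erase_of_mem hwT']
          omega
        obtain ⟨E', h1, h2, h3⟩ := stab_pairs hs hne (j - 1) _ hreg'' (by omega)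
        have hxE' : x ∉ E' := fun h =>
          (Finset.ne_of_mem_erase (Finset.mem_of_mem_erase (Finset.mem_of_mem_erase (h1 h)))) rfl
        have hwE' : w ∉ E' := fun h =>
          (Finset.ne_of_mem_erase (Finset.mem_of_mem_erase (h1 h))) rfl
        have hw'E' : w' ∉ E' := fun h => (Finset.ne_of_mem_erase (h1 h)) rfl
        refine ⟨insert x (insert w (insert w' E')), ?_, ?_, ?_⟩
        · intro y hy
          rcases Finset.mem_insert.1 hy with h | h
          · exact h ▸ hx
          rcases Finset.mem_insert.1 h with h | h
          · exact h ▸ hwT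
          rcases Finset.mem_insert.1 h with h | h
          · exact h ▸ hsub' hw'T'
          · exact hsub' (Finset.mem_of_mem_erase (Finset.mem_of_mem_erase (h1 h)))
        · rw [Finset.card_insert_of_notMem (by simp [hwx.symm, hw'x.symm, hxE'] : x ∉ _),
            Finset.card_insert_of_notMem (by simp [hww', hwE'] : w ∉ _),
            Finset.card_insert_of_notMem hw'E', h2]
          omega
        · intro u hu
          rcases Finset.mem_insert.1 hu with h | h
          · exact ⟨w, by simp, h ▸ hwB⟩
          rcases Finset.mem_insert.1 h with h | h
          · exact ⟨x, by simp, h ▸ hs x w hwB⟩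
          rcases Finset.mem_insert.1 h with h | h
          · exact ⟨w, by simp, h ▸ hs w w' hw'B⟩
          · obtain ⟨z, hz1, hz2⟩ := h3 u h
            exact ⟨z, by simp [hz1], hz2⟩

end StabHelpers


lemma stab_pairEquiv {V : Type*} [Fintype V] (σ : V → V)
    (hne : ∀ v, σ v ≠ v) (hinv : ∀ v, σ (σ v) = v) :
    Even (Fintype.card V) ∧
    ∃ e : V ≃ Fin (Fintype.card V),
      ∀ u w : V, (((e u : ℕ) / 2 = (e w : ℕ) / 2) ↔ (w = u ∨ w = σ u)) := by
  classical
  let s : Setoid V := ⟨fun u w => w = u ∨ w = σ u, by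
    constructor
    · intro x; exact Or.inl rfl
    · rintro x y (rfl | rfl)
      · exact Or.inl rfl
      · exact Or.inr (hinv x).symm
    · rintro x y z (rfl | rfl) h
      · exact h
      · rcases h with rfl | rfl
        · exact Or.inr rfl
        · rw [hinv]; exact Or.inl rfl⟩
  let Q := Quotient s
  have key : ∀ v : V, (Quotient.mk s v).out = v ∨ (Quotient.mk s v).out = σ v := by
    intro v
    have h : v = (Quotient.mk s v).out ∨ v = σ (Quotient.mk s v).out := Quotient.mk_out v
    rcases h with h | h
    · exact Or.inl h.symm
    · exact Or.inr ((congrArg σ h).trans (hinv _)).symm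
  have hmkσ : ∀ v : V, Quotient.mk s (σ v) = Quotient.mk s v := by
    intro v
    exact Quotient.sound (Or.inr (hinv v).symm)
  let f : V → Q × Bool := fun v => (Quotient.mk s v, decide (v = (Quotient.mk s v).out))
  let g : Q × Bool → V := fun p => if p.2 then p.1.out else σ p.1.out
  have hgf : Function.LeftInverse g f := by
    intro v
    rcases key v with h | h
    · have hd : decide (v = (Quotient.mk s v).out) = true := decide_eq_true h.symm
      simp only [f, g, hd, if_true]
      exact h
    · have hvo : v ≠ (Quotient.mk s v).out := fun he => hne v (he.trans h).symm
      have hd : decide (v = (Quotient.mk s v).out) = false := decide_eq_false hvo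
      simp only [f, g, hd]
      simp only [Bool.false_eq_true, if_false]
      rw [h, hinv]
  have hfg : Function.RightInverse g f := by
    rintro ⟨q, b⟩
    have hout : Quotient.mk s q.out = q := Quotient.out_eq q
    cases b
    · have h1 : Quotient.mk s (σ q.out) = q := (hmkσ q.out).trans hout
      have h2 : (Quotient.mk s (σ q.out)).out = q.out := by rw [h1]
      have hd : decide (σ q.out = (Quotient.mk s (σ q.out)).out) = false := by
        rw [h2]; exact decide_eq_false (hne q.out)
      simp only [f, g, Bool.false_eq_true, if_false]
      exact Prod.ext h1 hd
    · have hd : decide (q.out = (Quotient.mk s q.out).out) = true := by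
        rw [hout]; exact decide_eq_true rfl
      simp only [f, g, if_true]
      exact Prod.ext hout hd
  let e1 : V ≃ Q × Bool := ⟨f, g, hgf, hfg⟩
  have : Finite Q := Quotient.finite s
  let _ : Fintype Q := Fintype.ofFinite Q
  set t := Fintype.card Q with ht
  have hn : Fintype.card V = 2 * t := by
    rw [Fintype.card_congr e1, Fintype.card_prod, Fintype.card_bool]; ring
  let e2 : Q ≃ Fin t := Fintype.equivFin Q
  let e3 : Fin t × Bool ≃ Fin (Fintype.card V) :=
    { toFun := fun p => ⟨2 * p.1.val + (if p.2 then 1 else 0), by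
        have := p.1.isLt; split <;> omega⟩
      invFun := fun j => (⟨j.val / 2, by have := j.isLt; omega⟩, decide (j.val % 2 = 1))
      left_inv := by
        rintro ⟨i, b⟩
        cases b <;> simp only [if_true, if_false, Bool.false_eq_true] <;>
          refine Prod.ext (Fin.ext ?_) ?_ <;> simp <;> omega
      right_inv := by
        intro j
        refine Fin.ext ?_
        simp only
        split <;> rename_i hsp <;> simp_all <;> omega }
  let e : V ≃ Fin (Fintype.card V) := e1.trans ((e2.prodCongr (Equiv.refl Bool)).trans e3)
  have heval : ∀ v : V, (e v : ℕ) / 2 = (e2 (Quotient.mk s v)).val := by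
    intro v
    have hv : (e v : ℕ) = 2 * (e2 (Quotient.mk s v)).val +
        (if decide (v = (Quotient.mk s v).out) then 1 else 0) := rfl
    rw [hv]; split <;> omega
  constructor
  · exact ⟨t, by omega⟩
  refine ⟨e, fun u w => ?_⟩
  rw [heval, heval]
  constructor
  · intro h
    have h2 : e2 (Quotient.mk s u) = e2 (Quotient.mk s w) := Fin.ext h
    have h3 : Quotient.mk s u = Quotient.mk s w := e2.injective h2
    exact Quotient.exact h3
  · intro h
    have h3 : Quotient.mk s u = Quotient.mk s w := Quotient.sound h
    rw [h3]

theorem stmt_7 {V : Type*} [Fintype V] (G : SimpleGraph V) (r k : ℕ)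
    (hr : 3 ≤ r) (hcard : Fintype.card V = r + k + 1)
    (hdeg : ∀ v : V, (G.neighborSet v).ncard < r + k)
    (hstab : VertexStable (starG r) k G) :
    Even r ∧ Odd k ∧ Nonempty (G ≃g compMM (r + k + 1)) := by
  classical
  set B : V → V → Prop := fun u w => u ≠ w ∧ ¬ G.Adj u w with hB
  have hs : ∀ u w, B u w → B w u := fun u w h => ⟨h.1.symm, fun a => h.2 a.symm⟩
  have hne : ∀ u w, B u w → u ≠ w := fun u w h => h.1
  -- every vertex has a non-neighbour
  have h1 : ∀ v : V, ∃ w, B v w := by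
    intro v
    by_contra h
    push_neg at h
    simp only [hB, not_and, not_not] at h
    have hNS : G.neighborSet v = {v}ᶜ := by
      ext w
      simp only [SimpleGraph.mem_neighborSet, Set.mem_compl_iff, Set.mem_singleton_iff]
      constructor
      · intro ha hw; exact G.ne_of_adj ha (hw.symm)
      · intro hw; exact h w (fun he => hw he.symm)
    have h2 : (G.neighborSet v).ncard = r + k := by
      rw [hNS, Set.ncard_eq_toFinset_card']
      simp [Set.toFinset_compl, Finset.card_compl, hcard]
    exact absurd h2 (Nat.ne_of_lt (hdeg v))
  -- domination: every (r+1)-set has a vertex adjacent to all others in it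
  have hdom : ∀ S : Finset V, S.card = r + 1 → ∃ v ∈ S, ∀ w ∈ S, w ≠ v → G.Adj v w := by
    intro S hS
    have hFc : Sᶜ.card = k := by
      rw [Finset.card_compl, hcard, hS]; omega
    obtain ⟨f, hinj, havoid, hadj⟩ := hstab Sᶜ hFc
    have himg : Finset.image f Finset.univ = S := by
      apply Finset.eq_of_subset_of_card_le
      · intro x hx
        obtain ⟨a, _, rfl⟩ := Finset.mem_image.1 hx
        have := havoid a
        simpa using this
      · rw [hS, Finset.card_image_of_injective _ hinj]
        simp
    refine ⟨f none, by rw [← himg]; exact Finset.mem_image_of_mem f (Finset.mem_univ _), ?_⟩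
    intro w hw hwne
    rw [← himg] at hw
    obtain ⟨a, _, rfl⟩ := Finset.mem_image.1 hw
    match a with
    | none => exact absurd rfl hwne
    | some i => exact hadj none (some i) (by simp [starG])
  -- no (r+1)-set can have all its vertices non-dominating
  have hnoP : ∀ S : Finset V, S.card = r + 1 → ¬ stabPP B S := by
    intro S hS hPP
    obtain ⟨v, hvS, hvdom⟩ := hdom S hS
    obtain ⟨w, hwS, hwB⟩ := hPP v hvS
    exact hwB.2 (hvdom w hwS hwB.1.symm)
  have hPuniv : stabPP B Finset.univ := by
    intro u _
    obtain ⟨w, hw⟩ := h1 u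
    exact ⟨w, Finset.mem_univ w, hw⟩
  have hcu : (Finset.univ : Finset V).card = r + k + 1 := by
    rw [Finset.card_univ, hcard]
  have hnoTri : ¬ stabTri B Finset.univ := by
    intro htri
    obtain ⟨E, _, h2, h3⟩ := stab_lemA hs hne (Finset.univ : Finset V).card Finset.univ
      le_rfl hPuniv htri (r + 1) (by omega) (by omega)
    exact hnoP E h2 h3
  have hreg : stabOneReg B Finset.univ := stab_oneReg_of_noTri hPuniv hnoTri
  -- r is even
  have hEvenr : Even r := by
    by_contra hre
    obtain ⟨j, hj⟩ := Nat.not_even_iff_odd.1 hre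
    obtain ⟨E, _, h2, h3⟩ := stab_pairs hs hne (j + 1) Finset.univ hreg (by omega)
    exact hnoP E (by omega) h3
  -- the pairing function
  have hσ : ∀ v : V, ∃ w, B v w ∧ ∀ y, B v y → y = w := by
    intro v
    obtain ⟨w, ⟨_, hwB⟩, hwU⟩ := hreg v (Finset.mem_univ v)
    exact ⟨w, hwB, fun y hy => hwU y ⟨Finset.mem_univ y, hy⟩⟩
  set σ : V → V := fun v => (hσ v).choose with hσdef
  have hσB : ∀ v, B v (σ v) := fun v => (hσ v).choose_spec.1
  have hσU : ∀ v y, B v y → y = σ v := fun v => (hσ v).choose_spec.2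
  have hσne : ∀ v, σ v ≠ v := fun v => (hσB v).1.symm
  have hσinv : ∀ v, σ (σ v) = v := fun v => (hσU (σ v) v (hs v (σ v) (hσB v))).symm
  obtain ⟨hEvenV, e, he⟩ := stab_pairEquiv σ hσne hσinv
  refine ⟨hEvenr, ?_, ?_⟩
  · rw [Nat.odd_iff]
    have e1 := Nat.even_iff.1 hEvenr
    have e2 := Nat.even_iff.1 (hcard ▸ hEvenV)
    omega
  · let e' : V ≃ Fin (r + k + 1) := e.trans (finCongr hcard)
    have he' : ∀ v : V, ((e' v : ℕ)) = (e v : ℕ) := by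
      intro v
      simp [e', finCongr]
    refine ⟨⟨e', ?_⟩⟩
    intro u w
    simp only [compMM]
    show (e' u : ℕ) / 2 ≠ (e' w : ℕ) / 2 ↔ G.Adj u w
    rw [he', he']
    constructor
    · intro h
      by_contra hna
      apply h
      rw [he u w]
      by_cases huw : u = w
      · exact Or.inl huw.symm
      · exact Or.inr (hσU u w ⟨huw, hna⟩)
    · intro hA h
      rcases (he u w).1 h with rfl | rfl
      · exact G.loopless.irrefl _ hA
      · exact (hσB u).2 hA
end

section
/- Let r ≥ 3 and k ≥ 0 with either r odd, or r even and k < (r−1)² − 2. Then every (K_{1,r}; k)-vertex stable graph G of order r+k+1 satisfies |E(G)| ≥ (1/2)(k+1)(2r+k). -/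
open Finset

section Matchings
set_option linter.unusedSectionVars false
variable {V : Type*} [Fintype V] [DecidableEq V]

def IsMatch (H : SimpleGraph V) (M : Finset (V × V)) : Prop :=
  (∀ p ∈ M, H.Adj p.1 p.2) ∧
  ∀ p ∈ M, ∀ q ∈ M, p ≠ q → p.1 ≠ q.1 ∧ p.1 ≠ q.2 ∧ p.2 ≠ q.1 ∧ p.2 ≠ q.2

def mset (M : Finset (V × V)) : Finset V := M.biUnion fun p => {p.1, p.2}

lemma mem_mset {M : Finset (V × V)} {v : V} :
    v ∈ mset M ↔ ∃ p ∈ M, v = p.1 ∨ v = p.2 := by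
  simp [mset, mem_biUnion, or_comm, eq_comm]

lemma isMatch_mono {H : SimpleGraph V} {M P : Finset (V × V)} (hP : P ⊆ M)
    (hM : IsMatch H M) : IsMatch H P :=
  ⟨fun p hp => hM.1 p (hP hp), fun p hp q hq => hM.2 p (hP hp) q (hP hq)⟩

lemma card_mset {H : SimpleGraph V} {M : Finset (V × V)} (hM : IsMatch H M) :
    (mset M).card = 2 * M.card := by
  rw [mset, card_biUnion]
  · rw [Finset.sum_congr rfl fun p hp => ?_, Finset.sum_const, smul_eq_mul, mul_comm]
    exact card_pair (hM.1 p hp).ne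
  · intro p hp q hq hpq
    have h := hM.2 p hp q hq hpq
    simp only [disjoint_insert_left, disjoint_insert_right, disjoint_singleton,
      mem_insert, mem_singleton, not_or, disjoint_singleton_left]
    tauto

lemma buildS {H : SimpleGraph V} {M P : Finset (V × V)} (hM : IsMatch H M) (hP : P ⊆ M)
    (T : Finset V) (hdisj : ∀ t ∈ T, t ∉ mset P)
    (hTnb : ∀ t ∈ T, ∃ u ∈ mset P, H.Adj t u) :
    ∃ S : Finset V, S.card = 2 * P.card + T.card ∧ ∀ v ∈ S, ∃ u ∈ S, H.Adj v u := by
  have hPm : IsMatch H P := isMatch_mono hP hM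
  refine ⟨mset P ∪ T, ?_, ?_⟩
  · rw [card_union_of_disjoint (disjoint_right.2 hdisj), card_mset hPm]
  · intro v hv
    rcases mem_union.1 hv with hv | hv
    · obtain ⟨p, hp, hvp⟩ := mem_mset.1 hv
      rcases hvp with rfl | rfl
      · exact ⟨p.2, mem_union_left _ (mem_mset.2 ⟨p, hp, Or.inr rfl⟩), hPm.1 p hp⟩
      · exact ⟨p.1, mem_union_left _ (mem_mset.2 ⟨p, hp, Or.inl rfl⟩), (hPm.1 p hp).symm⟩
    · obtain ⟨u, hu, hadj⟩ := hTnb v hv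
      exact ⟨u, mem_union_left _ hu, hadj⟩

end Matchings

set_option maxHeartbeats 1000000 in
lemma compl_bound {V : Type*} [Fintype V] (H : SimpleGraph V) (r k : ℕ) (hr : 3 ≤ r)
    (hcard : Fintype.card V = r + k + 1)
    (hcase : Odd r ∨ (Even r ∧ k < (r - 1) ^ 2 - 2))
    (hS : ∀ S : Finset V, S.card = r + 1 → ∃ v ∈ S, ∀ u ∈ S, u ≠ v → ¬ H.Adj v u) :
    2 * H.edgeSet.ncard ≤ r * (r - 1) := by
  classical
  by_contra hlt
  push_neg at hlt
  -- convert to edgeFinset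
  have hefc : H.edgeSet.ncard = H.edgeFinset.card := by
    rw [Set.ncard_eq_toFinset_card']; congr 1
  rw [hefc] at hlt
  -- no bad set exists
  have hbad : ∀ S : Finset V, S.card = r + 1 → ¬ ∀ v ∈ S, ∃ u ∈ S, H.Adj v u := by
    intro S hScard hall
    obtain ⟨v, hv, hnone⟩ := hS S hScard
    obtain ⟨u, hu, hadj⟩ := hall v hv
    exact hnone u hu hadj.ne' hadj
  -- maximum matching
  obtain ⟨M, hMmem, hMmax⟩ := Finset.exists_max_image
    ((Finset.univ : Finset (Finset (V × V))).filter (IsMatch H)) Finset.card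
    ⟨∅, mem_filter.2 ⟨mem_univ _, ⟨by simp, by simp⟩⟩⟩
  have hM : IsMatch H M := (mem_filter.1 hMmem).2
  have hMmax' : ∀ N : Finset (V × V), IsMatch H N → N.card ≤ M.card := by
    intro N hN
    exact hMmax N (mem_filter.2 ⟨mem_univ _, hN⟩)
  -- P1 : every edge touches mset M
  have hP1 : ∀ a b : V, H.Adj a b → a ∈ mset M ∨ b ∈ mset M := by
    intro a b hab
    by_contra hc
    push_neg at hc
    obtain ⟨ha, hb⟩ := hc
    have habM : (a, b) ∉ M := fun h => ha (mem_mset.2 ⟨(a,b), h, Or.inl rfl⟩)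
    have : IsMatch H (insert (a, b) M) := by
      constructor
      · intro p hp
        rcases mem_insert.1 hp with rfl | hp
        · exact hab
        · exact hM.1 p hp
      · intro p hp q hq hpq
        have key : ∀ x, x ∈ mset M → x ≠ a ∧ x ≠ b := by
          intro x hx
          exact ⟨fun h => ha (h ▸ hx), fun h => hb (h ▸ hx)⟩
        rcases mem_insert.1 hp with rfl | hp <;> rcases mem_insert.1 hq with rfl | hq
        · exact absurd rfl hpq
        · have h1 := key q.1 (mem_mset.2 ⟨q, hq, Or.inl rfl⟩)
          have h2 := key q.2 (mem_mset.2 ⟨q, hq, Or.inr rfl⟩)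
          exact ⟨fun h => h1.1 h.symm, fun h => h2.1 h.symm,
                 fun h => h1.2 h.symm, fun h => h2.2 h.symm⟩
        · have h1 := key p.1 (mem_mset.2 ⟨p, hp, Or.inl rfl⟩)
          have h2 := key p.2 (mem_mset.2 ⟨p, hp, Or.inr rfl⟩)
          exact ⟨h1.1, h1.2, h2.1, h2.2⟩
        · exact hM.2 p hp q hq hpq
    have := hMmax' _ this
    rw [card_insert_of_notMem habM] at this
    omega
  -- support
  set W : Finset V := Finset.univ.filter (fun v => 0 < H.degree v) with hW
  have hWmem : ∀ v : V, v ∈ W ↔ ∃ u, H.Adj v u := by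
    intro v
    simp [hW, SimpleGraph.degree_pos_iff_exists_adj]
  -- degree sum
  have hdegsum : ∑ v, H.degree v = 2 * H.edgeFinset.card :=
    SimpleGraph.sum_degrees_eq_twice_card_edges H
  have hsumW : ∑ v, H.degree v = ∑ v ∈ W, H.degree v := by
    refine (Finset.sum_subset (subset_univ W) ?_).symm
    intro v _ hv
    rw [hWmem] at hv
    push_neg at hv
    have := (SimpleGraph.degree_pos_iff_exists_adj H v).not.2 (by push_neg; exact hv)
    omega
  have hdegW : ∀ v ∈ W, H.degree v ≤ W.card - 1 := by
    intro v hv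
    have hsub : H.neighborFinset v ⊆ W.erase v := by
      intro u hu
      rw [SimpleGraph.mem_neighborFinset] at hu
      exact mem_erase.2 ⟨hu.ne', (hWmem u).2 ⟨v, hu.symm⟩⟩
    calc H.degree v = (H.neighborFinset v).card := rfl
      _ ≤ (W.erase v).card := card_le_card hsub
      _ = W.card - 1 := by rw [card_erase_of_mem hv]
  have hWbig : r + 1 ≤ W.card := by
    by_contra hc
    push_neg at hc
    have h1 : 2 * H.edgeFinset.card ≤ W.card * (W.card - 1) := by
      rw [← hdegsum, hsumW]
      calc ∑ v ∈ W, H.degree v ≤ ∑ _v ∈ W, (W.card - 1) := Finset.sum_le_sum hdegW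
        _ = W.card * (W.card - 1) := by rw [Finset.sum_const, smul_eq_mul]
    have h2 : W.card * (W.card - 1) ≤ r * (r - 1) :=
      Nat.mul_le_mul (by omega) (by omega)
    omega
  have hMW : mset M ⊆ W := by
    intro v hv
    obtain ⟨p, hp, hvp⟩ := mem_mset.1 hv
    rcases hvp with rfl | rfl
    · exact (hWmem _).2 ⟨p.2, hM.1 p hp⟩
    · exact (hWmem _).2 ⟨p.1, (hM.1 p hp).symm⟩
  have hP3 : ∀ w ∈ W, w ∉ mset M → ∃ u ∈ mset M, H.Adj w u := by
    intro w hw hwm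
    obtain ⟨u, hu⟩ := (hWmem w).1 hw
    rcases hP1 w u hu with h | h
    · exact absurd h hwm
    · exact ⟨u, h, hu⟩
  -- Case I : 2*m ≤ r+1 : extend the matching vertex set by unmatched support vertices
  by_cases hcaseI : 2 * M.card ≤ r + 1
  · have hTcard : r + 1 - 2 * M.card ≤ (W \ mset M).card := by
      rw [card_sdiff_of_subset hMW, card_mset hM]
      omega
    obtain ⟨T, hTsub, hTcard'⟩ := exists_subset_card_eq hTcard
    obtain ⟨S, hScard, hSall⟩ := buildS hM (Finset.Subset.refl M) T
      (fun t ht => (mem_sdiff.1 (hTsub ht)).2)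
      (fun t ht => hP3 t (mem_sdiff.1 (hTsub ht)).1 (mem_sdiff.1 (hTsub ht)).2)
    exact hbad S (by omega) hSall
  push_neg at hcaseI
  rcases hcase with hodd | ⟨heven, hk⟩
  · -- r odd : take (r+1)/2 matching edges
    obtain ⟨t, rfl⟩ := hodd
    obtain ⟨P, hPsubM, hPcard⟩ := exists_subset_card_eq (show t + 1 ≤ M.card by omega)
    obtain ⟨S, hScard, hSall⟩ := buildS hM hPsubM ∅ (by simp) (by simp)
    rw [card_empty] at hScard
    exact hbad S (by omega) hSall
  · by_cases hdeg : ∀ v : V, H.degree v ≤ 1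
    · -- max degree ≤ 1 : too few edges
      have h1 : 2 * H.edgeFinset.card ≤ Fintype.card V := by
        rw [← hdegsum]
        calc ∑ v, H.degree v ≤ ∑ _v : V, 1 := Finset.sum_le_sum (fun v _ => hdeg v)
          _ = Fintype.card V := by simp
      obtain ⟨a, rfl⟩ : ∃ a, r = a + 1 := ⟨r - 1, by omega⟩
      have hk2 : k + 2 < (a + 1 - 1) ^ 2 := Nat.lt_sub_iff_add_lt.1 hk
      have e1 : (a + 1 - 1) ^ 2 = a * a := by simp [sq]
      rw [e1] at hk2
      have e2 : (a + 1) * (a + 1 - 1) = a * a + a := by simp [Nat.mul_comm]; ring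
      rw [e2] at hlt
      have f2 : 2 * H.edgeFinset.card ≤ a + k + 2 := by omega
      linarith
    · push_neg at hdeg
      obtain ⟨v, hv2⟩ := hdeg
      have hone : 1 < (H.neighborFinset v).card := hv2
      obtain ⟨x, hx, y, hy, hxy⟩ := Finset.one_lt_card.1 hone
      rw [SimpleGraph.mem_neighborFinset] at hx hy
      obtain ⟨t, ht⟩ := heven
      -- find a matching edge p0 and an extra vertex w adjacent to one of its endpoints
      have hfind : ∃ p0 ∈ M, ∃ w : V,
          w ≠ p0.1 ∧ w ≠ p0.2 ∧ (H.Adj p0.1 w ∨ H.Adj p0.2 w) := by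
        by_cases hvM : v ∈ mset M
        · obtain ⟨p0, hp0, hvp⟩ := mem_mset.1 hvM
          rcases hvp with hveq | hveq
          · by_cases hx2 : x = p0.2
            · refine ⟨p0, hp0, y, ?_, ?_, Or.inl ?_⟩
              · rw [← hveq]; exact hy.ne'
              · rw [← hx2]; exact Ne.symm hxy
              · rw [← hveq]; exact hy
            · refine ⟨p0, hp0, x, ?_, hx2, Or.inl ?_⟩
              · rw [← hveq]; exact hx.ne'
              · rw [← hveq]; exact hx
          · by_cases hx1 : x = p0.1
            · refine ⟨p0, hp0, y, ?_, ?_, Or.inr ?_⟩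
              · rw [← hx1]; exact Ne.symm hxy
              · rw [← hveq]; exact hy.ne'
              · rw [← hveq]; exact hy
            · refine ⟨p0, hp0, x, hx1, ?_, Or.inr ?_⟩
              · rw [← hveq]; exact hx.ne'
              · rw [← hveq]; exact hx
        · have hxM : x ∈ mset M := by
            rcases hP1 v x hx with h | h
            · exact absurd h hvM
            · exact h
          obtain ⟨p0, hp0, hxp⟩ := mem_mset.1 hxM
          have hv1 : v ≠ p0.1 := fun h => hvM (mem_mset.2 ⟨p0, hp0, Or.inl h⟩)
          have hv2' : v ≠ p0.2 := fun h => hvM (mem_mset.2 ⟨p0, hp0, Or.inr h⟩)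
          refine ⟨p0, hp0, v, hv1, hv2', ?_⟩
          rcases hxp with h | h
          · exact Or.inl (by rw [← h]; exact hx.symm)
          · exact Or.inr (by rw [← h]; exact hx.symm)
      obtain ⟨p0, hp0, w, hw1, hw2, hw3⟩ := hfind
      -- matching edges avoiding p0 and w
      have hM1card : M.card - 2 ≤ ((M.erase p0).filter (fun p => p.1 ≠ w ∧ p.2 ≠ w)).card := by
        have hsplit := Finset.card_filter_add_card_filter_not
          (s := M.erase p0) (p := fun p => p.1 ≠ w ∧ p.2 ≠ w)
        have hle1 : ((M.erase p0).filter (fun p => ¬(p.1 ≠ w ∧ p.2 ≠ w))).card ≤ 1 := by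
          apply Finset.card_le_one.2
          intro p hp q hq
          by_contra hne
          obtain ⟨⟨hpne, hpM⟩, hpw⟩ :=
            And.intro (mem_erase.1 (mem_filter.1 hp).1) (mem_filter.1 hp).2
          obtain ⟨⟨hqne, hqM⟩, hqw⟩ :=
            And.intro (mem_erase.1 (mem_filter.1 hq).1) (mem_filter.1 hq).2
          have hd := hM.2 p hpM q hqM hne
          have hpw' : p.1 = w ∨ p.2 = w := by
            by_contra hc; push_neg at hc; exact hpw ⟨hc.1, hc.2⟩
          have hqw' : q.1 = w ∨ q.2 = w := by
            by_contra hc; push_neg at hc; exact hqw ⟨hc.1, hc.2⟩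
          rcases hpw' with h | h <;> rcases hqw' with h' | h'
          · exact hd.1 (h.trans h'.symm)
          · exact hd.2.1 (h.trans h'.symm)
          · exact hd.2.2.1 (h.trans h'.symm)
          · exact hd.2.2.2 (h.trans h'.symm)
        have hec := card_erase_of_mem hp0
        omega
      obtain ⟨M2, hM2sub, hM2card⟩ := exists_subset_card_eq
        (le_trans (show t - 1 ≤ M.card - 2 by omega) hM1card)
      have hp0nM2 : p0 ∉ M2 := fun h => (mem_erase.1 (mem_filter.1 (hM2sub h)).1).1 rfl
      have hM2M : M2 ⊆ M := fun p hp => (mem_erase.1 (mem_filter.1 (hM2sub hp)).1).2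
      have hPM : insert p0 M2 ⊆ M := by
        intro p hp
        rcases mem_insert.1 hp with rfl | hp
        · exact hp0
        · exact hM2M hp
      have hPcard : (insert p0 M2).card = t := by
        rw [card_insert_of_notMem hp0nM2, hM2card]
        omega
      have hwP : w ∉ mset (insert p0 M2) := by
        intro hwm
        obtain ⟨p, hpP, hwp⟩ := mem_mset.1 hwm
        rcases mem_insert.1 hpP with rfl | hpM2
        · rcases hwp with h | h
          · exact hw1 h
          · exact hw2 h
        · have hf := (mem_filter.1 (hM2sub hpM2)).2
          rcases hwp with h | h
          · exact hf.1 h.symm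
          · exact hf.2 h.symm
      have hTnb : ∀ u ∈ ({w} : Finset V), ∃ z ∈ mset (insert p0 M2), H.Adj u z := by
        intro u hu
        rw [mem_singleton] at hu
        subst hu
        rcases hw3 with h | h
        · exact ⟨p0.1, mem_mset.2 ⟨p0, mem_insert_self _ _, Or.inl rfl⟩, h.symm⟩
        · exact ⟨p0.2, mem_mset.2 ⟨p0, mem_insert_self _ _, Or.inr rfl⟩, h.symm⟩
      obtain ⟨S, hScard, hSall⟩ := buildS hM hPM {w}
        (by intro u hu; rw [mem_singleton] at hu; subst hu; exact hwP) hTnb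
      rw [card_singleton, hPcard] at hScard
      exact hbad S (by omega) hSall



set_option maxHeartbeats 1000000 in
theorem stmt_12 {V : Type*} [Fintype V] (G : SimpleGraph V) (r k : ℕ)
    (hr : 3 ≤ r) (hcard : Fintype.card V = r + k + 1)
    (hcase : Odd r ∨ (Even r ∧ k < (r - 1) ^ 2 - 2))
    (hstab : VertexStable (starG r) k G) :
    (k + 1) * (2 * r + k) ≤ 2 * G.edgeSet.ncard := by
  classical
  have hS : ∀ S : Finset V, S.card = r + 1 → ∃ v ∈ S, ∀ u ∈ S, u ≠ v → ¬ Gᶜ.Adj v u := by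
    intro S hScard
    obtain ⟨f, hinj, havoid, hhom⟩ := hstab Sᶜ
      (by rw [Finset.card_compl, hcard, hScard]; omega)
    have hrange : ∀ a, f a ∈ S := by
      intro a
      have := havoid a
      simpa [Finset.mem_compl] using this
    have himg : Finset.univ.image f = S := by
      apply Finset.eq_of_subset_of_card_le
      · intro u hu
        obtain ⟨a, _, rfl⟩ := Finset.mem_image.1 hu
        exact hrange a
      · rw [hScard, Finset.card_image_of_injective _ hinj, Finset.card_univ,
          Fintype.card_option, Fintype.card_fin]
    refine ⟨f none, hrange none, ?_⟩
    intro u hu hune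
    obtain ⟨a, _, rfl⟩ := Finset.mem_image.1 (himg ▸ hu)
    match a with
    | none => exact absurd rfl hune
    | some i =>
      have hadj : G.Adj (f none) (f (some i)) :=
        hhom none (some i) (by simp [starG])
      exact fun hc => hc.2 hadj
  have hcb := compl_bound Gᶜ r k hr hcard hcase hS
  have hdc : ∀ v : V, G.degree v + Gᶜ.degree v = Fintype.card V - 1 := by
    intro v
    have h1 := G.degree_compl (v := v)
    have h2 : G.degree v < Fintype.card V := G.degree_lt_card_verts v
    omega
  have hsum : 2 * G.edgeFinset.card + 2 * Gᶜ.edgeFinset.card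
      = Fintype.card V * (Fintype.card V - 1) := by
    rw [← SimpleGraph.sum_degrees_eq_twice_card_edges,
      ← SimpleGraph.sum_degrees_eq_twice_card_edges, ← Finset.sum_add_distrib,
      Finset.sum_congr rfl fun v _ => hdc v, Finset.sum_const, Finset.card_univ, smul_eq_mul]
  have hG : G.edgeSet.ncard = G.edgeFinset.card := by
    rw [Set.ncard_eq_toFinset_card']; congr 1
  have hGc : Gᶜ.edgeSet.ncard = Gᶜ.edgeFinset.card := by
    rw [Set.ncard_eq_toFinset_card']; congr 1
  rw [hcard] at hsum
  rw [hG]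
  rw [hGc] at hcb
  obtain ⟨s, rfl⟩ : ∃ s, r = s + 1 := ⟨r - 1, by omega⟩
  have hcb' : 2 * Gᶜ.edgeFinset.card ≤ (s + 1) * s := by simpa using hcb
  have hsum' : 2 * G.edgeFinset.card + 2 * Gᶜ.edgeFinset.card = (s + k + 2) * (s + k + 1) := by
    rw [hsum]; congr 1 <;> omega
  nlinarith [hsum', hcb']
end

section
/- Let r ≥ 3 and k ≥ 0 with either r odd, or r even and k < (r−1)² − 2. If G is a (K_{1,r}; k)-vertex stable graph of order r+k+1 with exactly (1/2)(k+1)(2r+k) edges, then G is isomorphic to the join K_{k+1} * \bar{K}_r. -/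
lemma selectC {V : Type*} [DecidableEq V] (H : SimpleGraph V) (S : Finset V) :
    ∀ (A : Finset V) (q : ℕ), Even q → q ≤ S.card →
      (∀ v ∈ S, v ∈ A ∨ ∃ u ∈ S, H.Adj v u) →
      ∃ W ⊆ S, W.card = q ∧ ∀ v ∈ W, v ∈ A ∨ ∃ u ∈ W, H.Adj v u := by
  induction S using Finset.strongInduction with
  | _ S ih =>
  intro A q hq hqS hP
  rcases eq_or_lt_of_le hqS with heq | hlt
  · exact ⟨S, Finset.Subset.refl S, heq.symm, hP⟩
  by_cases hrem : ∃ v ∈ S, ∀ u ∈ S.erase v, u ∈ A ∨ ∃ w ∈ S.erase v, H.Adj u w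
  · obtain ⟨v, hv, hprop⟩ := hrem
    have hcard : q ≤ (S.erase v).card := by
      rw [Finset.card_erase_of_mem hv]; omega
    obtain ⟨W, hWsub, hWcard, hWP⟩ := ih _ (Finset.erase_ssubset hv) A q hq hcard hprop
    exact ⟨W, hWsub.trans (Finset.erase_subset _ _), hWcard, hWP⟩
  · push_neg at hrem
    have key : ∀ v ∈ S, v ∉ A ∧ ∃ u ∈ S, H.Adj v u ∧ ∀ w ∈ S, H.Adj v w → w = u := by
      intro v hv
      obtain ⟨u, huE, huA, huN⟩ := hrem v hv
      have huS : u ∈ S := Finset.mem_of_mem_erase huE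
      have hNu : ∀ w ∈ S, H.Adj u w → w = v := by
        intro w hw hR
        by_contra hne
        exact huN w (Finset.mem_erase.mpr ⟨hne, hw⟩) hR
      have hRuv : H.Adj u v := by
        rcases hP u huS with h | ⟨w, hw, hR⟩
        · exact absurd h huA
        · have hwv := hNu w hw hR
          rwa [hwv] at hR
      obtain ⟨w, hwE, hwA, hwN⟩ := hrem u huS
      have hwS : w ∈ S := Finset.mem_of_mem_erase hwE
      have hNw : ∀ x ∈ S, H.Adj w x → x = u := by
        intro x hx hR
        by_contra hne
        exact hwN x (Finset.mem_erase.mpr ⟨hne, hx⟩) hR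
      have hRwu : H.Adj w u := by
        rcases hP w hwS with h | ⟨x, hx, hR⟩
        · exact absurd h hwA
        · have hxu := hNw x hx hR
          rwa [hxu] at hR
      have hwv : w = v := hNu w hwS hRwu.symm
      subst hwv
      exact ⟨hwA, u, huS, hRuv.symm, hNw⟩
    rcases Nat.eq_zero_or_pos q with h0 | hpos
    · exact ⟨∅, by simp, by simp [h0], by simp⟩
    have hSne : S.Nonempty := Finset.card_pos.mp (by omega)
    obtain ⟨v, hv⟩ := hSne
    obtain ⟨-, u, huS, hRvu, hvuniq⟩ := key v hv
    have hvu : v ≠ u := hRvu.ne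
    have huuniq : ∀ w ∈ S, H.Adj u w → w = v := by
      obtain ⟨-, u', hu'S, hRuu', huq⟩ := key u huS
      have : v = u' := huq v hv hRvu.symm
      subst this
      exact huq
    set S' := (S.erase v).erase u with hS'
    have hS'sub : S' ⊆ S := (Finset.erase_subset _ _).trans (Finset.erase_subset _ _)
    have huE : u ∈ S.erase v := Finset.mem_erase.mpr ⟨Ne.symm hvu, huS⟩
    have hS'card : S'.card = S.card - 2 := by
      rw [hS', Finset.card_erase_of_mem huE, Finset.card_erase_of_mem hv]; omega
    have hq2 : 2 ≤ q := by
      rcases hq with ⟨t, rfl⟩; omega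
    have hP' : ∀ x ∈ S', x ∈ A ∨ ∃ y ∈ S', H.Adj x y := by
      intro x hx
      have hxS : x ∈ S := hS'sub hx
      have hxv : x ≠ v := (Finset.mem_erase.mp (Finset.mem_erase.mp hx).2).1
      have hxu : x ≠ u := (Finset.mem_erase.mp hx).1
      obtain ⟨-, y, hyS, hRxy, -⟩ := key x hxS
      refine Or.inr ⟨y, ?_, hRxy⟩
      have hyv : y ≠ v := by
        intro h; subst h
        exact hxu (hvuniq x hxS hRxy.symm)
      have hyu : y ≠ u := by
        intro h; subst h
        exact hxv (huuniq x hxS hRxy.symm)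
      exact Finset.mem_erase.mpr ⟨hyu, Finset.mem_erase.mpr ⟨hyv, hyS⟩⟩
    have hq2' : q - 2 ≤ S'.card := by omega
    have hev' : Even (q - 2) := by rcases hq with ⟨t, ht⟩; exact ⟨t - 1, by omega⟩
    obtain ⟨W', hW'sub, hW'card, hW'P⟩ :=
      ih S' (Finset.ssubset_of_subset_of_ssubset (Finset.erase_subset _ _)
        (Finset.erase_ssubset hv)) A (q - 2) hev' hq2' hP'
    have hvW' : v ∉ W' := fun h => (Finset.mem_erase.mp ((Finset.mem_erase.mp (hW'sub h)).2)).1 rfl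
    have huW' : u ∉ W' := fun h => (Finset.mem_erase.mp (hW'sub h)).1 rfl
    refine ⟨insert v (insert u W'), ?_, ?_, ?_⟩
    · intro x hx
      rcases Finset.mem_insert.mp hx with rfl | hx
      · exact hv
      rcases Finset.mem_insert.mp hx with rfl | hx
      · exact huS
      exact hS'sub (hW'sub hx)
    · rw [Finset.card_insert_of_notMem (by
        intro h
        rcases Finset.mem_insert.mp h with h | h
        · exact hvu h
        · exact hvW' h), Finset.card_insert_of_notMem huW', hW'card]
      omega
    · intro x hx
      rcases Finset.mem_insert.mp hx with rfl | hx
      · exact Or.inr ⟨u, Finset.mem_insert.mpr (Or.inr (Finset.mem_insert_self _ _)), hRvu⟩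
      rcases Finset.mem_insert.mp hx with rfl | hx
      · exact Or.inr ⟨v, Finset.mem_insert_self _ _, hRvu.symm⟩
      rcases hW'P x hx with h | ⟨y, hy, hR⟩
      · exact Or.inl h
      · exact Or.inr ⟨y, Finset.mem_insert.mpr (Or.inr (Finset.mem_insert.mpr (Or.inr hy))), hR⟩

lemma selectW {V : Type*} [DecidableEq V] (H : SimpleGraph V)
    (S : Finset V) (q : ℕ) (hq2 : 2 ≤ q) (hqS : q ≤ S.card)
    (hP : ∀ v ∈ S, ∃ u ∈ S, H.Adj v u)
    (hpar : Even q ∨ ∃ z ∈ S, ∃ a ∈ S, ∃ b ∈ S, a ≠ b ∧ H.Adj z a ∧ H.Adj z b) :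
    ∃ W ⊆ S, W.card = q ∧ ∀ v ∈ W, ∃ u ∈ W, H.Adj v u := by
  classical
  by_cases heven : Even q
  · obtain ⟨W, hWS, hWc, hWP⟩ := selectC H S ∅ q heven hqS (fun v hv => Or.inr (hP v hv))
    exact ⟨W, hWS, hWc, fun v hv => (hWP v hv).resolve_left (by simp)⟩
  · obtain ⟨z, hz, a, ha, b, hb, hab, hza, hzb⟩ := hpar.resolve_left heven
    have hzae : z ≠ a := hza.ne
    have hzbe : z ≠ b := hzb.ne
    set T : Finset V := {z, a, b} with hT
    have hTS : T ⊆ S := by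
      intro x hx
      rw [hT] at hx
      simp only [Finset.mem_insert, Finset.mem_singleton] at hx
      rcases hx with rfl | rfl | rfl <;> assumption
    have hTcard : T.card = 3 := by
      rw [hT, Finset.card_insert_of_notMem (by simp [hzae, hzbe]),
        Finset.card_insert_of_notMem (by simp [hab]), Finset.card_singleton]
    have hq3 : 3 ≤ q := by
      rcases Nat.even_or_odd q with h | h
      · exact absurd h heven
      · rcases h with ⟨t, rfl⟩; omega
    set A : Finset V := (S \ T).filter (fun v => ∃ t ∈ T, H.Adj v t) with hA
    have hcard' : q - 3 ≤ (S \ T).card := by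
      rw [Finset.card_sdiff_of_subset hTS, hTcard]; omega
    have heven' : Even (q - 3) :=
      Nat.Odd.sub_odd (Nat.not_even_iff_odd.mp heven) (by decide)
    obtain ⟨W2, hW2S, hW2c, hW2P⟩ := selectC H (S \ T) A (q - 3) heven' hcard' (by
      intro v hv
      obtain ⟨u, huS, hR⟩ := hP v (Finset.mem_sdiff.mp hv).1
      by_cases hu : u ∈ T
      · exact Or.inl (Finset.mem_filter.mpr ⟨hv, u, hu, hR⟩)
      · exact Or.inr ⟨u, Finset.mem_sdiff.mpr ⟨huS, hu⟩, hR⟩)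
    have hdisj : Disjoint T W2 := by
      rw [Finset.disjoint_left]
      intro x hxT hxW
      exact (Finset.mem_sdiff.mp (hW2S hxW)).2 hxT
    refine ⟨T ∪ W2, Finset.union_subset hTS (hW2S.trans (Finset.sdiff_subset)), ?_, ?_⟩
    · rw [Finset.card_union_of_disjoint hdisj, hTcard, hW2c]; omega
    · intro x hx
      rcases Finset.mem_union.mp hx with hxT | hxW
      · have hzT : z ∈ T ∪ W2 := Finset.mem_union_left _ (by simp [hT])
        have haT : a ∈ T ∪ W2 := Finset.mem_union_left _ (by simp [hT])
        rw [hT] at hxT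
        simp only [Finset.mem_insert, Finset.mem_singleton] at hxT
        rcases hxT with rfl | rfl | rfl
        · exact ⟨a, haT, hza⟩
        · exact ⟨z, hzT, hza.symm⟩
        · exact ⟨z, hzT, hzb.symm⟩
      · rcases hW2P x hxW with hxA | ⟨y, hy, hR⟩
        · obtain ⟨-, t, htT, hR⟩ := Finset.mem_filter.mp hxA
          exact ⟨t, Finset.mem_union_left _ htT, hR⟩
        · exact ⟨y, Finset.mem_union_right _ hy, hR⟩


theorem stmt_13 {V : Type*} [Fintype V] (G : SimpleGraph V) (r k : ℕ)
    (hr : 3 ≤ r) (hcard : Fintype.card V = r + k + 1)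
    (hcase : Odd r ∨ (Even r ∧ k < (r - 1) ^ 2 - 2))
    (hstab : VertexStable (starG r) k G)
    (hsize : 2 * G.edgeSet.ncard = (k + 1) * (2 * r + k)) :
    Nonempty (G ≃g joinKE k r) := by
  classical
  obtain ⟨m, rfl⟩ : ∃ m, r = m + 3 := ⟨r - 3, by omega⟩
  set n := m + 3 + k + 1 with hn
  -- total degree of complement
  have hdeg : ∀ v : V, G.degree v + Gᶜ.degree v = m + 3 + k := by
    intro v
    have h1 := G.degree_lt_card_verts v
    have h2 : Gᶜ.degree v = Fintype.card V - 1 - G.degree v := SimpleGraph.degree_compl _ _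
    omega
  have hGsum : ∑ v : V, G.degree v = (k + 1) * (2 * (m + 3) + k) := by
    rw [SimpleGraph.sum_degrees_eq_twice_card_edges]
    rw [← hsize]
    congr 1
    rw [SimpleGraph.edgeFinset, ← Set.ncard_eq_toFinset_card']
  have hCsum : ∑ v : V, Gᶜ.degree v = (m + 3) * (m + 2) := by
    have h1 : ∑ v : V, (G.degree v + Gᶜ.degree v) = (m + 3 + k + 1) * (m + 3 + k) := by
      rw [Finset.sum_congr rfl (fun v _ => hdeg v), Finset.sum_const, Finset.card_univ, hcard,
        smul_eq_mul]
    rw [Finset.sum_add_distrib, hGsum] at h1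
    have hid : (m + 3 + k + 1) * (m + 3 + k) = (k + 1) * (2 * (m + 3) + k) + (m + 3) * (m + 2) := by
      ring
    omega
  -- A = complement-isolated vertices, S = rest
  set A : Finset V := Finset.univ.filter (fun v => Gᶜ.degree v = 0) with hA
  set S : Finset V := Finset.univ.filter (fun v => ¬ Gᶜ.degree v = 0) with hS
  have hcards : A.card + S.card = n := by
    rw [hA, hS, Finset.card_filter_add_card_filter_not, Finset.card_univ, hcard]
  have hNsub : ∀ v : V, Gᶜ.neighborFinset v ⊆ S := by
    intro v u hu
    rw [SimpleGraph.mem_neighborFinset] at hu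
    have : v ∈ Gᶜ.neighborFinset u := (SimpleGraph.mem_neighborFinset _ _ _).mpr hu.symm
    exact Finset.mem_filter.mpr ⟨Finset.mem_univ u, fun h0 => by
      rw [SimpleGraph.degree] at h0
      exact Finset.card_ne_zero_of_mem this h0⟩
  have hSsum : ∑ v ∈ S, Gᶜ.degree v = (m + 3) * (m + 2) := by
    have h0 : ∑ v ∈ A, Gᶜ.degree v = 0 :=
      Finset.sum_eq_zero (fun v hv => (Finset.mem_filter.mp hv).2)
    have := Finset.sum_filter_add_sum_filter_not Finset.univ
      (fun v => Gᶜ.degree v = 0) (fun v => Gᶜ.degree v)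
    rw [← hA, ← hS, h0, zero_add] at this
    rw [this, hCsum]
  by_cases hAk : A.card ≤ k
  · -- contradiction branch: select W of size m+4 with complement-neighbors inside
    exfalso
    have hScard : m + 4 ≤ S.card := by omega
    have hP : ∀ v ∈ S, ∃ u ∈ S, Gᶜ.Adj v u := by
      intro v hv
      have hd : Gᶜ.degree v ≠ 0 := (Finset.mem_filter.mp hv).2
      have : (Gᶜ.neighborFinset v).Nonempty := Finset.card_pos.mp (Nat.pos_of_ne_zero hd)
      obtain ⟨u, hu⟩ := this
      exact ⟨u, hNsub v hu, (SimpleGraph.mem_neighborFinset _ _ _).mp hu⟩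
    have hpar : Even (m + 4) ∨
        ∃ z ∈ S, ∃ a ∈ S, ∃ b ∈ S, a ≠ b ∧ Gᶜ.Adj z a ∧ Gᶜ.Adj z b := by
      rcases hcase with hodd | ⟨heven, hk⟩
      · left
        rcases hodd with ⟨t, ht⟩
        exact ⟨t + 1, by omega⟩
      · right
        by_contra hno
        push_neg at hno
        have hd1 : ∀ v ∈ S, Gᶜ.degree v ≤ 1 := by
          intro v hv
          by_contra hd
          push_neg at hd
          obtain ⟨a, ha, b, hb, hab⟩ := Finset.one_lt_card.mp hd
          rw [SimpleGraph.mem_neighborFinset] at ha hb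
          exact hno v hv a (hNsub v ((SimpleGraph.mem_neighborFinset _ _ _).mpr ha))
            b (hNsub v ((SimpleGraph.mem_neighborFinset _ _ _).mpr hb)) hab ha hb
        have hsumle : ∑ v ∈ S, Gᶜ.degree v ≤ S.card := by
          calc ∑ v ∈ S, Gᶜ.degree v ≤ ∑ _v ∈ S, 1 := Finset.sum_le_sum hd1
          _ = S.card := by simp
        have hSn : S.card ≤ n := by omega
        have he0 : (m + 3 - 1) ^ 2 = (m + 2) ^ 2 := by norm_num
        have he2 : (m + 2) ^ 2 = m * m + 4 * m + 4 := by ring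
        have he3 : (m + 3) * (m + 2) = m * m + 5 * m + 6 := by ring
        omega
    obtain ⟨W, hWS, hWcard, hWP⟩ := selectW Gᶜ S (m + 4) (by omega) hScard hP hpar
    have hFcard : Wᶜ.card = k := by
      rw [Finset.card_compl, hWcard, hcard]; omega
    obtain ⟨f, hinj, havoid, hhom⟩ := hstab Wᶜ hFcard
    have hfW : ∀ a, f a ∈ W := by
      intro a
      have := havoid a
      rwa [Finset.mem_compl, not_not] at this
    have himg : Finset.univ.image f = W := by
      apply Finset.eq_of_subset_of_card_le
      · intro x hx
        obtain ⟨a, -, rfl⟩ := Finset.mem_image.mp hx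
        exact hfW a
      · rw [Finset.card_image_of_injective _ hinj, Finset.card_univ, Fintype.card_option,
          Fintype.card_fin, hWcard]
    obtain ⟨u, huW, hadj⟩ := hWP (f none) (hfW none)
    obtain ⟨x, -, hx⟩ := Finset.mem_image.mp (himg ▸ huW)
    have hxnone : x ≠ none := by
      intro h
      subst h
      exact hadj.ne (hx ▸ rfl)
    obtain ⟨i, rfl⟩ := Option.ne_none_iff_exists'.mp hxnone
    have := hhom none (some i) (⟨by simp, Or.inl rfl⟩ : (starG (m+3)).Adj none (some i))
    rw [hx] at this
    exact hadj.2 this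
  · push_neg at hAk
    have hSr : S.card ≤ m + 3 := by omega
    have hNsub' : ∀ v : V, Gᶜ.neighborFinset v ⊆ S.erase v := by
      intro v u hu
      refine Finset.mem_erase.mpr ⟨?_, hNsub v hu⟩
      intro h; subst h
      exact Gᶜ.irrefl ((SimpleGraph.mem_neighborFinset _ _ _).mp hu)
    have hdegle : ∀ v ∈ S, Gᶜ.degree v ≤ S.card - 1 := by
      intro v hv
      calc Gᶜ.degree v ≤ (S.erase v).card := Finset.card_le_card (hNsub' v)
      _ = S.card - 1 := Finset.card_erase_of_mem hv
    have hsum_le : (m + 3) * (m + 2) ≤ S.card * (S.card - 1) := by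
      rw [← hSsum]
      calc ∑ v ∈ S, Gᶜ.degree v ≤ ∑ _v ∈ S, (S.card - 1) := Finset.sum_le_sum hdegle
      _ = S.card * (S.card - 1) := by rw [Finset.sum_const, smul_eq_mul]
    have hSeq : S.card = m + 3 := by
      by_contra hne
      have h1 : S.card ≤ m + 2 := by omega
      have h2 : S.card * (S.card - 1) ≤ (m + 2) * (m + 1) :=
        Nat.mul_le_mul h1 (by omega)
      have e1 : (m + 2) * (m + 1) = m * m + 3 * m + 2 := by ring
      have e3 : (m + 3) * (m + 2) = m * m + 5 * m + 6 := by ring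
      omega
    have hdegeq : ∀ v ∈ S, Gᶜ.degree v = m + 2 := by
      by_contra hne
      push_neg at hne
      obtain ⟨v, hv, hvne⟩ := hne
      have hlt : Gᶜ.degree v < m + 2 := by
        have := hdegle v hv
        omega
      have hslt : ∑ v ∈ S, Gᶜ.degree v < ∑ _v ∈ S, (m + 2) := by
        apply Finset.sum_lt_sum
        · intro i hi
          have := hdegle i hi
          omega
        · exact ⟨v, hv, hlt⟩
      rw [hSsum, Finset.sum_const, smul_eq_mul, hSeq] at hslt
      omega
    have hclique : ∀ v ∈ S, ∀ u ∈ S, u ≠ v → Gᶜ.Adj v u := by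
      intro v hv u hu huv
      have heq : Gᶜ.neighborFinset v = S.erase v := by
        apply Finset.eq_of_subset_of_card_le (hNsub' v)
        rw [Finset.card_erase_of_mem hv, hSeq]
        have hd := hdegeq v hv
        rw [SimpleGraph.degree] at hd
        omega
      have : u ∈ Gᶜ.neighborFinset v := heq ▸ Finset.mem_erase.mpr ⟨huv, hu⟩
      exact (SimpleGraph.mem_neighborFinset _ _ _).mp this
    have hAiso : ∀ v ∈ A, ∀ u, u ≠ v → G.Adj v u := by
      intro v hv u huv
      have hd : Gᶜ.degree v = 0 := (Finset.mem_filter.mp hv).2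
      by_contra hadj
      have hcadj : Gᶜ.Adj v u := (SimpleGraph.compl_adj G v u).mpr ⟨Ne.symm huv, hadj⟩
      have hmem : u ∈ Gᶜ.neighborFinset v := (SimpleGraph.mem_neighborFinset _ _ _).mpr hcadj
      rw [SimpleGraph.degree] at hd
      exact Finset.card_ne_zero_of_mem hmem hd
    have hmemS : ∀ x : V, x ∉ A → x ∈ S := by
      intro x hx
      refine Finset.mem_filter.mpr ⟨Finset.mem_univ _, fun h0 => hx ?_⟩
      exact Finset.mem_filter.mpr ⟨Finset.mem_univ _, h0⟩
    have hchar : ∀ u v : V, G.Adj u v ↔ u ≠ v ∧ (u ∈ A ∨ v ∈ A) := by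
      intro u v
      constructor
      · intro h
        refine ⟨h.ne, ?_⟩
        by_contra hn
        push_neg at hn
        exact ((SimpleGraph.compl_adj G u v).mp
          (hclique u (hmemS u hn.1) v (hmemS v hn.2) (Ne.symm h.ne))).2 h
      · rintro ⟨hne, h | h⟩
        · exact hAiso u h v (Ne.symm hne)
        · exact (hAiso v h u hne).symm
    have hAcard : A.card = k + 1 := by omega
    have eA : {x // x ∈ A} ≃ Fin (k + 1) := by
      apply Fintype.equivFinOfCardEq
      rw [Fintype.card_coe, hAcard]
    have eS : {x // ¬ x ∈ A} ≃ Fin (m + 3) := by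
      apply Fintype.equivFinOfCardEq
      rw [Fintype.card_subtype_compl, Fintype.card_coe, hAcard, hcard]
      omega
    set e : V ≃ (Fin (k + 1) ⊕ Fin (m + 3)) :=
      (Equiv.sumCompl (· ∈ A)).symm.trans (Equiv.sumCongr eA eS) with he
    have hleft : ∀ x : V, (e x).isLeft = true ↔ x ∈ A := by
      intro x
      by_cases hx : x ∈ A
      · simp [he, Equiv.sumCompl, hx]
      · simp [he, Equiv.sumCompl, hx]
    refine ⟨⟨e, ?_⟩⟩
    intro a b
    show (e a ≠ e b ∧ ((e a).isLeft ∨ (e b).isLeft)) ↔ G.Adj a b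
    rw [hchar a b]
    have hne : e a ≠ e b ↔ a ≠ b := by
      constructor
      · intro h hab
        exact h (hab ▸ rfl)
      · intro h hab
        exact h (e.injective hab)
    constructor
    · rintro ⟨h1, h2⟩
      refine ⟨hne.mp h1, ?_⟩
      rcases h2 with h | h
      · exact Or.inl ((hleft a).mp h)
      · exact Or.inr ((hleft b).mp h)
    · rintro ⟨h1, h2⟩
      refine ⟨hne.mpr h1, ?_⟩
      rcases h2 with h | h
      · exact Or.inl ((hleft a).mpr h)
      · exact Or.inr ((hleft b).mpr h)
end

section
/- Let r ≥ 4 be even, k = (r−1)², and let G be a (K_{1,r}; k)-vertex stable graph of order r+k+1. Then |E(G)| ≥ (1/2)((r+k)² − 1), with equality exactly when G is the complete graph K_{r+k+1} minus a perfect matching. -/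
instance compMM.adjDecidable (n : ℕ) : DecidableRel (compMM n).Adj :=
  fun a b => inferInstanceAs (Decidable ((a : ℕ)/2 ≠ (b : ℕ)/2))

open Finset in
lemma exists_badset {V : Type*} [Fintype V] [DecidableEq V] (H : SimpleGraph V)
    [DecidableRel H.Adj] {v a b : V} (hva : H.Adj v a) (hvb : H.Adj v b) (hab : a ≠ b)
    (j : ℕ) (hD : 3 + 2 * j ≤ (univ.filter fun u : V => ∃ w, H.Adj u w).card) :
    ∃ S : Finset V, S.card = 3 + 2 * j ∧ ∀ w ∈ S, ∃ u ∈ S, H.Adj w u := by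
  induction j with
  | zero =>
    refine ⟨{v, a, b}, ?_, ?_⟩
    · rw [card_insert_of_notMem (by simp [hva.ne, hvb.ne]),
        card_insert_of_notMem (by simp [hab]), card_singleton]
    · intro w hw
      simp only [mem_insert, mem_singleton] at hw
      rcases hw with rfl | rfl | rfl
      · exact ⟨a, by simp, hva⟩
      · exact ⟨v, by simp, hva.symm⟩
      · exact ⟨v, by simp, hvb.symm⟩
  | succ j ih =>
    obtain ⟨S, hScard, hSbad⟩ := ih (by omega)
    have hSD : S ⊆ univ.filter fun u : V => ∃ w, H.Adj u w := by
      intro w hw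
      obtain ⟨u, _, hu⟩ := hSbad w hw
      simp only [mem_filter, mem_univ, true_and]
      exact ⟨u, hu⟩
    have h2 : 1 < ((univ.filter fun u : V => ∃ w, H.Adj u w) \ S).card := by
      have := Finset.card_sdiff_of_subset hSD
      omega
    obtain ⟨x, hx, x', hx', hxx'⟩ := Finset.one_lt_card.mp h2
    obtain ⟨hxD, hxS⟩ := Finset.mem_sdiff.mp hx
    obtain ⟨hx'D, hx'S⟩ := Finset.mem_sdiff.mp hx'
    obtain ⟨y, hy⟩ : ∃ w, H.Adj x w := by
      simpa only [mem_filter, mem_univ, true_and] using hxD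
    obtain ⟨y', hy'⟩ : ∃ w, H.Adj x' w := by
      simpa only [mem_filter, mem_univ, true_and] using hx'D
    have main : ∀ p q : V, p ∉ S → q ∉ S → p ≠ q →
        (∃ u ∈ insert p (insert q S), H.Adj p u) →
        (∃ u ∈ insert p (insert q S), H.Adj q u) →
        ∃ S' : Finset V, S'.card = 3 + 2 * (j + 1) ∧ ∀ w ∈ S', ∃ u ∈ S', H.Adj w u := by
      intro p q hp hq hpq hpu hqu
      refine ⟨insert p (insert q S), ?_, ?_⟩
      · rw [card_insert_of_notMem (by simp [hpq, hp]), card_insert_of_notMem hq]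
        omega
      · intro w hw
        rcases Finset.mem_insert.mp hw with rfl | hw
        · exact hpu
        rcases Finset.mem_insert.mp hw with rfl | hw
        · exact hqu
        · obtain ⟨u, hu, huadj⟩ := hSbad w hw
          exact ⟨u, by simp [hu], huadj⟩
    by_cases hyS : y ∈ S
    · by_cases hy'S : y' ∈ S
      · exact main x x' hxS hx'S hxx' ⟨y, by simp [hyS], hy⟩ ⟨y', by simp [hy'S], hy'⟩
      · by_cases hy'x : y' = x
        · exact main x x' hxS hx'S hxx' ⟨y, by simp [hyS], hy⟩ ⟨x, by simp, hy'x ▸ hy'⟩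
        · exact main x' y' hx'S hy'S hy'.ne ⟨y', by simp, hy'⟩ ⟨x', by simp, hy'.symm⟩
    · exact main x y hxS hyS hy.ne ⟨y, by simp, hy⟩ ⟨x, by simp, hy.symm⟩

open Finset in
lemma iso_of_unique_nbr {V : Type*} [Fintype V] [DecidableEq V] {n : ℕ}
    (hn : Fintype.card V = n) (G : SimpleGraph V)
    (hdeg : ∀ v : V, ∃! w : V, Gᶜ.Adj v w) : Nonempty (G ≃g compMM n) := by
  classical
  choose σ hσ1 hσ2 using hdeg
  have hadj : ∀ v w, Gᶜ.Adj v w ↔ w = σ v := fun v w => ⟨hσ2 v w, fun h => h ▸ hσ1 v⟩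
  have hinv : ∀ v, σ (σ v) = v := fun v => (hσ2 (σ v) v (hσ1 v).symm).symm
  have hne : ∀ v, σ v ≠ v := fun v => (hσ1 v).ne'
  set g := Fintype.equivFinOfCardEq hn with hg
  set R : Finset V := univ.filter (fun v => g v < g (σ v)) with hR
  have hmemR : ∀ v, v ∈ R ↔ g v < g (σ v) := by intro v; simp [hR]
  have hswap : ∀ v, σ v ∈ R ↔ v ∉ R := by
    intro v
    rw [hmemR, hmemR, hinv]
    have hval : (g v : ℕ) ≠ (g (σ v) : ℕ) := by
      intro h
      exact hne v (g.injective (Fin.ext h.symm))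
    simp only [Fin.lt_def]
    omega
  have hcardR : R.card + R.card = n := by
    have h1 : Rᶜ.card = R.card := by
      apply Finset.card_bij' (fun v _ => σ v) (fun v _ => σ v)
      · intro v hv
        exact (hswap v).mpr (Finset.mem_compl.mp hv)
      · intro v hv
        rw [Finset.mem_compl]
        intro h
        exact (hswap v).mp h hv
      · intro v _; exact hinv v
      · intro v _; exact hinv v
    have h2 := Finset.card_add_card_compl R
    rw [h1] at h2
    rw [h2, hn]
  set eR : {x // x ∈ R} ≃ Fin R.card := R.equivFin with heR
  set repI : V → {x // x ∈ R} := fun v =>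
    if h : v ∈ R then ⟨v, h⟩ else ⟨σ v, (hswap v).mpr h⟩ with hrepI
  have hrepval : ∀ v, ((repI v : V) = v ∧ v ∈ R) ∨ ((repI v : V) = σ v ∧ v ∉ R) := by
    intro v
    by_cases h : v ∈ R
    · left; constructor; · simp [hrepI, h]
      · exact h
    · right; constructor; · simp [hrepI, h]
      · exact h
  have hrep_eq : ∀ u w : V, repI u = repI w ↔ (w = u ∨ w = σ u) := by
    intro u w
    constructor
    · intro h
      have h' : (repI u : V) = (repI w : V) := congrArg _ h
      rcases hrepval u with ⟨h1, _⟩ | ⟨h1, _⟩ <;> rcases hrepval w with ⟨h2, _⟩ | ⟨h2, _⟩ <;>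
          rw [h1, h2] at h'
      · exact Or.inl h'.symm
      · right; rw [h', hinv]
      · exact Or.inr h'.symm
      · left
        have := congrArg σ h'
        rw [hinv, hinv] at this
        exact this.symm
    · intro h
      rcases h with rfl | rfl
      · rfl
      · by_cases h : u ∈ R
        · have h2 : σ u ∉ R := fun hh => (hswap u).mp hh h
          apply Subtype.ext
          simp [hrepI, h, h2, hinv]
        · have h2 : σ u ∈ R := (hswap u).mpr h
          apply Subtype.ext
          simp [hrepI, h, h2]
  have hbound : ∀ v : V, 2 * ((eR (repI v) : ℕ)) + (if v ∈ R then 0 else 1) < n := by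
    intro v
    have h1 := (eR (repI v)).isLt
    by_cases h : v ∈ R <;> simp only [h, if_true, if_false] <;> omega
  set e : V → Fin n := fun v => ⟨2 * ((eR (repI v) : ℕ)) + (if v ∈ R then 0 else 1), hbound v⟩
    with he
  have hdiv : ∀ v, ((e v : ℕ)) / 2 = ((eR (repI v) : ℕ)) := by
    intro v
    by_cases h : v ∈ R <;> simp only [he, h, if_true, if_false] <;> omega
  have hparity : ∀ u w : V, (e u : ℕ) = (e w : ℕ) → repI u = repI w ∧ ((u ∈ R) ↔ (w ∈ R)) := by
    intro u w hval
    simp only [he] at hval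
    by_cases h : u ∈ R <;> by_cases h' : w ∈ R <;>
        simp only [h, h', if_true, if_false] at hval
    · exact ⟨eR.injective (Fin.ext (by omega)), by simp [h, h']⟩
    · exact absurd hval (by omega)
    · exact absurd hval (by omega)
    · exact ⟨eR.injective (Fin.ext (by omega)), by simp [h, h']⟩
  have hinj : Function.Injective e := by
    intro u w h
    have hval : (e u : ℕ) = (e w : ℕ) := congrArg Fin.val h
    obtain ⟨hrep, hiff⟩ := hparity u w hval
    rcases (hrep_eq u w).mp hrep with rfl | rfl
    · rfl
    · exfalso
      by_cases h2 : u ∈ R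
      · exact ((hswap u).mp (hiff.mp h2)) h2
      · exact h2 (hiff.mpr ((hswap u).mpr h2))
  have hbij : Function.Bijective e :=
    (Fintype.bijective_iff_injective_and_card e).mpr ⟨hinj, by simp [hn]⟩
  have key : ∀ u w : V, (compMM n).Adj (e u) (e w) ↔ G.Adj u w := by
    intro u w
    have h1 : (compMM n).Adj (e u) (e w) ↔ repI u ≠ repI w := by
      show ((e u : ℕ) / 2 ≠ (e w : ℕ) / 2) ↔ _
      rw [hdiv, hdiv]
      constructor
      · intro h hh; exact h (by rw [hh])
      · intro h hh; exact h (eR.injective (Fin.ext hh))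
    rw [h1]
    constructor
    · intro h
      have h2 : ¬ (w = u ∨ w = σ u) := fun hh => h ((hrep_eq u w).mpr hh)
      push_neg at h2
      obtain ⟨h2, h3⟩ := h2
      by_contra hG
      exact h3 (hσ2 u w ((SimpleGraph.compl_adj G u w).mpr ⟨fun hh => h2 hh.symm, hG⟩))
    · intro hG h
      rcases (hrep_eq u w).mp h with rfl | rfl
      · exact G.loopless.irrefl _ hG
      · exact ((hadj _ _).mpr rfl).2 hG
  exact ⟨⟨Equiv.ofBijective e hbij, fun {a b} => key a b⟩⟩

open Finset in
lemma compMM_degree {n : ℕ} (hn : Even n) (i : Fin n) :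
    (compMM n).degree i = n - 2 := by
  obtain ⟨s, hs⟩ := hn
  have hi : (i : ℕ) < n := i.isLt
  have hb1 : 2 * ((i : ℕ) / 2) < n := by omega
  have hb2 : 2 * ((i : ℕ) / 2) + 1 < n := by omega
  have hfil : (univ.filter fun j : Fin n => (i : ℕ) / 2 = (j : ℕ) / 2)
      = {⟨2 * ((i : ℕ) / 2), hb1⟩, ⟨2 * ((i : ℕ) / 2) + 1, hb2⟩} := by
    ext j
    simp only [mem_filter, mem_univ, true_and, mem_insert, mem_singleton, Fin.ext_iff]
    have hj : (j : ℕ) < n := j.isLt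
    omega
  have hcard2 : (univ.filter fun j : Fin n => (i : ℕ) / 2 = (j : ℕ) / 2).card = 2 := by
    rw [hfil, card_insert_of_notMem (by simp), card_singleton]
  have hnf : (compMM n).neighborFinset i
      = univ.filter fun j : Fin n => ¬ ((i : ℕ) / 2 = (j : ℕ) / 2) := by
    ext j
    simp only [SimpleGraph.mem_neighborFinset, mem_filter, mem_univ, true_and]
    exact Iff.rfl
  have hadd := Finset.card_filter_add_card_filter_not
    (s := (univ : Finset (Fin n))) (p := fun j : Fin n => (i : ℕ) / 2 = (j : ℕ) / 2)
  rw [Finset.card_univ, Fintype.card_fin] at hadd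
  rw [SimpleGraph.degree, hnf]
  omega

open Finset in
theorem stmt_14 {V : Type*} [Fintype V] (G : SimpleGraph V) (r k : ℕ)
    (hr : 4 ≤ r) (hre : Even r) (hk : k = (r - 1) ^ 2)
    (hcard : Fintype.card V = r + k + 1)
    (hstab : VertexStable (starG r) k G) :
    (r + k) ^ 2 - 1 ≤ 2 * G.edgeSet.ncard ∧
      (2 * G.edgeSet.ncard = (r + k) ^ 2 - 1 ↔
        Nonempty (G ≃g compMM (r + k + 1))) := by
  classical
  -- parity
  have hodd : Odd k := by
    rw [hk]
    exact (Nat.Even.sub_odd (by omega) hre odd_one).pow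
  have hneven : Even (r + k + 1) := by
    obtain ⟨c, hc⟩ := hodd; obtain ⟨s, hs⟩ := hre
    rw [Nat.even_iff]; omega
  -- star extraction
  have hP : ∀ S : Finset V, S.card = r + 1 → ∃ w ∈ S, ∀ u ∈ S, u ≠ w → G.Adj w u := by
    intro S hS
    have hF : Sᶜ.card = k := by
      have := Finset.card_compl S
      rw [hcard, hS] at this
      omega
    obtain ⟨f, hfinj, hfav, hfhom⟩ := hstab Sᶜ hF
    have himg : Finset.univ.image f = S := by
      apply Finset.eq_of_subset_of_card_le
      · intro x hx
        obtain ⟨a, _, rfl⟩ := Finset.mem_image.mp hx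
        simpa using hfav a
      · rw [Finset.card_image_of_injective _ hfinj, Finset.card_univ, Fintype.card_option,
          Fintype.card_fin, hS]
    refine ⟨f none, ?_, ?_⟩
    · rw [← himg]; exact Finset.mem_image_of_mem f (Finset.mem_univ none)
    · intro u hu hune
      rw [← himg] at hu
      obtain ⟨a, _, rfl⟩ := Finset.mem_image.mp hu
      match a with
      | none => exact absurd rfl hune
      | some i => exact hfhom none (some i) ⟨by simp, Or.inl rfl⟩
  have hnobad : ∀ S : Finset V, S.card = r + 1 → ¬ (∀ w ∈ S, ∃ u ∈ S, Gᶜ.Adj w u) := by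
    intro S hS hbad
    obtain ⟨w, hw, hdom⟩ := hP S hS
    obtain ⟨u, hu, hadj⟩ := hbad w hw
    exact ((SimpleGraph.compl_adj G w u).mp hadj).2 (hdom u hu hadj.ne.symm)
  -- degree sum of complement
  have hsum : ∑ v, G.degree v + ∑ v, Gᶜ.degree v = (r + k + 1) * (r + k) := by
    rw [← Finset.sum_add_distrib]
    have heach : ∀ v : V, G.degree v + Gᶜ.degree v = r + k := by
      intro v
      have h1 := SimpleGraph.degree_compl G v
      have h2 : G.degree v < Fintype.card V := G.degree_lt_card_verts v
      rw [hcard] at h1 h2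
      omega
    rw [Finset.sum_congr rfl fun v _ => heach v, Finset.sum_const, Finset.card_univ, hcard,
      smul_eq_mul]
  have hHsum : ∑ v, Gᶜ.degree v ≤ r + k + 1 ∧
      (∑ v, Gᶜ.degree v = r + k + 1 → ∀ v, Gᶜ.degree v = 1) := by
    by_cases hA : ∀ v, Gᶜ.degree v ≤ 1
    · constructor
      · calc ∑ v, Gᶜ.degree v ≤ ∑ _v : V, 1 := Finset.sum_le_sum fun v _ => hA v
          _ = r + k + 1 := by simp [hcard]
      · intro hEq v
        by_contra hv
        have hv0 : Gᶜ.degree v = 0 := by have := hA v; omega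
        have hlt : ∑ w, Gᶜ.degree w < ∑ _w : V, 1 :=
          Finset.sum_lt_sum (fun w _ => hA w) ⟨v, Finset.mem_univ v, by omega⟩
        simp only [Finset.sum_const, Finset.card_univ, hcard, smul_eq_mul, mul_one] at hlt
        omega
    · push_neg at hA
      obtain ⟨v, hv⟩ := hA
      have h2 : 1 < (Gᶜ.neighborFinset v).card := hv
      obtain ⟨a, ha, b, hb, hab⟩ := Finset.one_lt_card.mp h2
      rw [SimpleGraph.mem_neighborFinset] at ha hb
      have hDr : (univ.filter fun u : V => ∃ w, Gᶜ.Adj u w).card ≤ r := by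
        by_contra hDr
        obtain ⟨s, hs⟩ := hre
        obtain ⟨S, hS1, hS2⟩ := exists_badset Gᶜ ha hb hab (r / 2 - 1) (by omega)
        have hScard : S.card = r + 1 := by rw [hS1]; omega
        exact hnobad S hScard hS2
      have hzero : ∀ u : V, u ∉ (univ.filter fun u : V => ∃ w, Gᶜ.Adj u w) →
          Gᶜ.degree u = 0 := by
        intro u hu
        simp only [mem_filter, mem_univ, true_and] at hu
        have := (Gᶜ.degree_pos_iff_exists_adj u).not.mpr hu
        omega
      have hdegD : ∀ u ∈ (univ.filter fun u : V => ∃ w, Gᶜ.Adj u w), Gᶜ.degree u ≤ r - 1 := by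
        intro u hu
        have hsub : Gᶜ.neighborFinset u ⊆ (univ.filter fun u : V => ∃ w, Gᶜ.Adj u w).erase u := by
          intro w hw
          rw [SimpleGraph.mem_neighborFinset] at hw
          refine Finset.mem_erase.mpr ⟨hw.ne', ?_⟩
          simp only [mem_filter, mem_univ, true_and]
          exact ⟨u, hw.symm⟩
        have h3 := Finset.card_le_card hsub
        rw [Finset.card_erase_of_mem hu] at h3
        have h4 : Gᶜ.degree u = (Gᶜ.neighborFinset u).card := rfl
        omega
      have hlt : ∑ v, Gᶜ.degree v ≤ r * (r - 1) := by
        have hss : ∑ v, Gᶜ.degree v = ∑ u ∈ (univ.filter fun u : V => ∃ w, Gᶜ.Adj u w),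
            Gᶜ.degree u :=
          (Finset.sum_subset (Finset.subset_univ _) (fun u _ hu => hzero u hu)).symm
        rw [hss]
        calc ∑ u ∈ (univ.filter fun u : V => ∃ w, Gᶜ.Adj u w), Gᶜ.degree u
            ≤ ∑ _u ∈ (univ.filter fun u : V => ∃ w, Gᶜ.Adj u w), (r - 1) :=
              Finset.sum_le_sum hdegD
          _ = (univ.filter fun u : V => ∃ w, Gᶜ.Adj u w).card * (r - 1) := by
              rw [Finset.sum_const, smul_eq_mul]
          _ ≤ r * (r - 1) := Nat.mul_le_mul_right _ hDr
      have hrn : r * (r - 1) < r + k + 1 := by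
        obtain ⟨m, rfl⟩ : ∃ m, r = m + 4 := ⟨r - 4, by omega⟩
        subst hk
        have h5 : m + 4 - 1 = m + 3 := by omega
        have h6 : (m + 4 - 1) ^ 2 = m * m + 6 * m + 9 := by rw [h5]; ring
        have h7 : (m + 4) * (m + 4 - 1) = m * m + 7 * m + 12 := by rw [h5]; ring
        omega
      exact ⟨by omega, fun h => absurd h (by omega)⟩
  obtain ⟨hle, heq1⟩ := hHsum
  have hEncard : G.edgeSet.ncard = G.edgeFinset.card := by
    rw [← SimpleGraph.coe_edgeFinset, Set.ncard_coe_finset]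
  have h2E : 2 * G.edgeSet.ncard = ∑ v, G.degree v := by
    rw [hEncard]
    exact (SimpleGraph.sum_degrees_eq_twice_card_edges G).symm
  have hNN : (r + k) ^ 2 = (r + k) * (r + k) := pow_two (r + k)
  have hmul : (r + k + 1) * (r + k) = (r + k) * (r + k) + (r + k) := by ring
  obtain ⟨B, hB⟩ : ∃ B, (r + k) * (r + k) = B := ⟨_, rfl⟩
  obtain ⟨C, hC⟩ : ∃ C, (r + k + 1) * (r + k) = C := ⟨_, rfl⟩
  rw [hB] at hNN hmul
  rw [hC] at hsum hmul
  have hBpos : 1 ≤ B := by rw [← hB]; nlinarith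
  rw [hNN]
  constructor
  · omega
  constructor
  · intro hEeq
    have hHn : ∑ v, Gᶜ.degree v = r + k + 1 := by omega
    have hdeg1 := heq1 hHn
    have huniq : ∀ v : V, ∃! w : V, Gᶜ.Adj v w := by
      intro v
      obtain ⟨w, hw⟩ := Finset.card_eq_one.mp (hdeg1 v)
      refine ⟨w, ?_, ?_⟩
      · show Gᶜ.Adj v w
        rw [← SimpleGraph.mem_neighborFinset, hw]
        exact Finset.mem_singleton_self w
      · intro y hy
        have hy2 : Gᶜ.Adj v y := hy
        rw [← SimpleGraph.mem_neighborFinset, hw, Finset.mem_singleton] at hy2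
        exact hy2
    exact iso_of_unique_nbr hcard G huniq
  · rintro ⟨φ⟩
    have hEeq : G.edgeFinset.card = (compMM (r + k + 1)).edgeFinset.card :=
      φ.card_edgeFinset_eq
    have hsum2 : ∑ i : Fin (r + k + 1), (compMM (r + k + 1)).degree i
        = (r + k + 1) * (r + k + 1 - 2) := by
      rw [Finset.sum_congr rfl fun i _ => compMM_degree hneven i, Finset.sum_const,
        Finset.card_univ, Fintype.card_fin, smul_eq_mul]
    have h2C : 2 * (compMM (r + k + 1)).edgeFinset.card = (r + k + 1) * (r + k + 1 - 2) := by
      rw [← hsum2]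
      exact (SimpleGraph.sum_degrees_eq_twice_card_edges _).symm
    have hfin : (r + k + 1) * (r + k + 1 - 2) = (r + k) * (r + k) - 1 := by
      obtain ⟨m, hm⟩ : ∃ m, r + k = m + 1 := ⟨r + k - 1, by omega⟩
      rw [hm]
      have h6 : (m + 1 + 1) * (m + 1 + 1 - 2) = m * m + 2 * m := by
        have : m + 1 + 1 - 2 = m := by omega
        rw [this]; ring
      have h7 : (m + 1) * (m + 1) = m * m + 2 * m + 1 := by ring
      omega
    rw [hB] at hfin
    obtain ⟨D, hD⟩ : ∃ D, (r + k + 1) * (r + k + 1 - 2) = D := ⟨_, rfl⟩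
    rw [hD] at hfin h2C
    omega
end

section
/- Let r ≥ 4 be even and let k > (r−1)² be even. If G is a (K_{1,r}; k)-vertex stable graph of order r+k+1, then |E(G)| ≥ (1/2)(r+k)². -/
/-- If every edge of `H` has both endpoints in `W`, then `2e(H) ≤ |W|(|W|-1)`. -/
lemma edges_in_set_bound {V : Type*} [Fintype V] [DecidableEq V]
    (H : SimpleGraph V) [DecidableRel H.Adj] (W : Finset V)
    (hW : ∀ a b, H.Adj a b → a ∈ W) :
    2 * H.edgeFinset.card ≤ W.card * (W.card - 1) := by
  rw [← SimpleGraph.sum_degrees_eq_twice_card_edges]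
  have hzero : ∀ v ∈ Finset.univ, v ∉ W → H.degree v = 0 := by
    intro v _ hv
    rw [← SimpleGraph.card_neighborFinset_eq_degree, Finset.card_eq_zero]
    ext u
    simp only [SimpleGraph.mem_neighborFinset, Finset.notMem_empty, iff_false]
    exact fun h => hv (hW v u h)
  have hsub : ∑ v, H.degree v = ∑ v ∈ W, H.degree v :=
    (Finset.sum_subset W.subset_univ (fun v hv hv' => hzero v hv hv')).symm
  rw [hsub]
  have hdeg : ∀ v ∈ W, H.degree v ≤ W.card - 1 := by
    intro v hv
    rw [← SimpleGraph.card_neighborFinset_eq_degree]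
    have hsubW : H.neighborFinset v ⊆ W.erase v := by
      intro u hu
      rw [SimpleGraph.mem_neighborFinset] at hu
      exact Finset.mem_erase.mpr ⟨hu.ne', hW u v hu.symm⟩
    calc (H.neighborFinset v).card ≤ (W.erase v).card := Finset.card_le_card hsubW
      _ = W.card - 1 := Finset.card_erase_of_mem hv
  calc ∑ v ∈ W, H.degree v ≤ ∑ _v ∈ W, (W.card - 1) := Finset.sum_le_sum hdeg
    _ = W.card * (W.card - 1) := by rw [Finset.sum_const, smul_eq_mul]

/-- Core combinatorial lemma: a graph on `r+k+1` vertices with at least `(r+k+2)/2` edges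
contains a set of `r+1` vertices each having a neighbour inside the set. -/
lemma exists_linked {V : Type*} [Fintype V] [DecidableEq V]
    (H : SimpleGraph V) [DecidableRel H.Adj] (r k : ℕ)
    (hr : 4 ≤ r) (hre : Even r) (hk : (r - 1) ^ 2 < k)
    (hcard : Fintype.card V = r + k + 1)
    (hE : r + k + 2 ≤ 2 * H.edgeFinset.card) :
    ∃ S : Finset V, S.card = r + 1 ∧ ∀ v ∈ S, ∃ u ∈ S, H.Adj v u := by
  -- arithmetic: r * (r - 1) < r + k + 2
  have hrr : r * (r - 1) < r + k + 2 := by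
    obtain ⟨t, rfl⟩ : ∃ t, r = t + 1 := ⟨r - 1, by omega⟩
    simp only [Nat.add_sub_cancel, pow_two] at hk ⊢
    have h2 : (t + 1) * t = t * t + t := by ring
    omega
  -- find a vertex of degree ≥ 2
  have hdeg2 : ∃ v : V, 2 ≤ H.degree v := by
    by_contra h
    push_neg at h
    have : ∑ v, H.degree v ≤ Finset.univ.card * 1 :=
      Finset.sum_le_card_nsmul _ _ 1 (fun v _ => by have := h v; omega)
    rw [SimpleGraph.sum_degrees_eq_twice_card_edges, Finset.card_univ, hcard] at this
    omega
  obtain ⟨v, hv⟩ := hdeg2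
  rw [← SimpleGraph.card_neighborFinset_eq_degree] at hv
  obtain ⟨a, ha, b, hb, hab⟩ := Finset.one_lt_card.mp hv
  rw [SimpleGraph.mem_neighborFinset] at ha hb
  -- main induction: linked sets of every odd size 3 + 2j ≤ r + 1 exist
  have main : ∀ j : ℕ, 3 + 2 * j ≤ r + 1 →
      ∃ S : Finset V, S.card = 3 + 2 * j ∧ ∀ x ∈ S, ∃ u ∈ S, H.Adj x u := by
    intro j
    induction j with
    | zero =>
      intro _
      refine ⟨{v, a, b}, ?_, ?_⟩
      · exact Finset.card_eq_three.mpr ⟨v, a, b, ha.ne, hb.ne, hab, rfl⟩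
      · intro x hx
        simp only [Finset.mem_insert, Finset.mem_singleton] at hx
        rcases hx with rfl | rfl | rfl
        · exact ⟨a, by simp, ha⟩
        · exact ⟨v, by simp, ha.symm⟩
        · exact ⟨v, by simp, hb.symm⟩
    | succ j ih =>
      intro hle
      obtain ⟨S, hScard, hSlink⟩ := ih (by omega)
      by_cases hout : ∃ x y, H.Adj x y ∧ x ∉ S ∧ y ∉ S
      · obtain ⟨x, y, hxy, hx, hy⟩ := hout
        refine ⟨insert x (insert y S), ?_, ?_⟩
        · rw [Finset.card_insert_of_notMem, Finset.card_insert_of_notMem hy, hScard]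
          · ring
          · simp only [Finset.mem_insert]
            push_neg
            exact ⟨hxy.ne, hx⟩
        · intro z hz
          simp only [Finset.mem_insert] at hz
          rcases hz with rfl | rfl | hzS
          · exact ⟨y, by simp, hxy⟩
          · exact ⟨x, by simp, hxy.symm⟩
          · obtain ⟨u, hu, huadj⟩ := hSlink z hzS
            exact ⟨u, by simp [hu], huadj⟩
      · push_neg at hout
        set A : Finset V := Finset.univ.filter (fun w => w ∉ S ∧ ∃ u ∈ S, H.Adj w u) with hA
        by_cases hAcard : 2 ≤ A.card
        · obtain ⟨w₁, hw₁, w₂, hw₂, hwne⟩ := Finset.one_lt_card.mp hAcard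
          rw [hA, Finset.mem_filter] at hw₁ hw₂
          obtain ⟨-, hw₁S, u₁, hu₁, hadj₁⟩ := hw₁
          obtain ⟨-, hw₂S, u₂, hu₂, hadj₂⟩ := hw₂
          refine ⟨insert w₁ (insert w₂ S), ?_, ?_⟩
          · rw [Finset.card_insert_of_notMem, Finset.card_insert_of_notMem hw₂S, hScard]
            · ring
            · simp only [Finset.mem_insert]
              push_neg
              exact ⟨hwne, hw₁S⟩
          · intro z hz
            simp only [Finset.mem_insert] at hz
            rcases hz with rfl | rfl | hzS
            · exact ⟨u₁, by simp [hu₁], hadj₁⟩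
            · exact ⟨u₂, by simp [hu₂], hadj₂⟩
            · obtain ⟨u, hu, huadj⟩ := hSlink z hzS
              exact ⟨u, by simp [hu], huadj⟩
        · exfalso
          have hWall : ∀ p q, H.Adj p q → p ∈ S ∪ A := by
            intro p q hpq
            by_cases hpS : p ∈ S
            · exact Finset.mem_union_left _ hpS
            · have hqS : q ∈ S := hout p q hpq hpS
              refine Finset.mem_union_right _ ?_
              rw [hA, Finset.mem_filter]
              exact ⟨Finset.mem_univ _, hpS, q, hqS, hpq⟩
          have hbound := edges_in_set_bound H (S ∪ A) hWall
          have hWcard : (S ∪ A).card ≤ r := by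
            have h1 : (S ∪ A).card ≤ S.card + A.card := Finset.card_union_le _ _
            omega
          have hmono : (S ∪ A).card * ((S ∪ A).card - 1) ≤ r * (r - 1) :=
            Nat.mul_le_mul hWcard (Nat.sub_le_sub_right hWcard 1)
          omega
  obtain ⟨m, hm⟩ := hre
  obtain ⟨S, hScard, hSlink⟩ := main (m - 1) (by omega)
  exact ⟨S, by omega, hSlink⟩

theorem stmt_15 {V : Type*} [Fintype V] (G : SimpleGraph V) (r k : ℕ)
    (hr : 4 ≤ r) (hre : Even r) (hke : Even k) (hk : (r - 1) ^ 2 < k)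
    (hcard : Fintype.card V = r + k + 1)
    (hstab : VertexStable (starG r) k G) :
    (r + k) ^ 2 ≤ 2 * G.edgeSet.ncard := by
  classical
  -- Step 1: no "linked" set of size r+1 in the complement graph
  have hnolink : ∀ S : Finset V, S.card = r + 1 → ∃ v ∈ S, ∀ u ∈ S, ¬ (Gᶜ).Adj v u := by
    intro S hS
    obtain ⟨f, hfinj, hfF, hfadj⟩ := hstab Sᶜ (by rw [Finset.card_compl, hcard, hS]; omega)
    have hfS : ∀ a, f a ∈ S := by
      intro a
      have := hfF a
      simpa using this
    have himg : Finset.image f Finset.univ = S := by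
      apply Finset.eq_of_subset_of_card_le
      · intro x hx
        obtain ⟨a, -, rfl⟩ := Finset.mem_image.mp hx
        exact hfS a
      · rw [hS, Finset.card_image_of_injective _ hfinj, Finset.card_univ]
        simp
    refine ⟨f none, hfS none, ?_⟩
    intro u hu hadj
    rw [← himg, Finset.mem_image] at hu
    obtain ⟨a, -, rfl⟩ := hu
    rcases a with _ | i
    · exact hadj.ne rfl
    · have hstar : (starG r).Adj none (some i) :=
        ⟨fun h => (by cases h), Or.inl rfl⟩
      exact ((SimpleGraph.compl_adj G (f none) (f (some i))).mp hadj).2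
        (hfadj none (some i) hstar)
  by_contra hlt
  push_neg at hlt
  -- Step 2: edge counting in the complement
  have hdegsum : ∀ v : V, G.degree v + (Gᶜ).degree v = r + k := by
    intro v
    have h1 : (Gᶜ).degree v = Fintype.card V - 1 - G.degree v := SimpleGraph.degree_compl G v
    have h2 : G.degree v < Fintype.card V := G.degree_lt_card_verts v
    omega
  have hsum : 2 * G.edgeFinset.card + 2 * (Gᶜ).edgeFinset.card = (r + k + 1) * (r + k) := by
    rw [← SimpleGraph.sum_degrees_eq_twice_card_edges, ← SimpleGraph.sum_degrees_eq_twice_card_edges,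
      ← Finset.sum_add_distrib]
    rw [Finset.sum_congr rfl (fun v _ => hdegsum v), Finset.sum_const, Finset.card_univ, hcard,
      smul_eq_mul]
  have hncard : G.edgeSet.ncard = G.edgeFinset.card := by
    rw [Set.ncard_eq_toFinset_card']
    congr 1
  rw [hncard] at hlt
  have hE : r + k + 2 ≤ 2 * (Gᶜ).edgeFinset.card := by
    obtain ⟨c, hc⟩ := hre
    obtain ⟨d, hd⟩ := hke
    have hsq : (r + k + 1) * (r + k) = (r + k) ^ 2 + (r + k) := by ring
    omega
  obtain ⟨S, hS, hlink⟩ := exists_linked (Gᶜ) r k hr hre hk hcard hE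
  obtain ⟨v, hv, hnone⟩ := hnolink S hS
  obtain ⟨u, hu, hadj⟩ := hlink v hv
  exact hnone u hu hadj
end

section
/- Let r ≥ 4 be even and k ≥ (r−1)² be even. The graph obtained by adding one vertex joined to all vertices of the (r+k−2)-regular graph K_{r+k} minus a perfect matching is (K_{1,r}; k)-vertex stable and has exactly (1/2)(r+k)² edges. -/
/-- The cone over a graph: one new vertex (`none`) joined to all old vertices. -/
def coneG {n : ℕ} (G : SimpleGraph (Fin n)) : SimpleGraph (Option (Fin n)) where
  Adj a b :=
    match a, b with
    | none, none => False
    | none, some _ => True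
    | some _, none => True
    | some i, some j => G.Adj i j
  symm := by
    constructor
    intro a b h
    match a, b with
    | none, none => exact h
    | none, some _ => trivial
    | some _, none => trivial
    | some i, some j => exact h.symm
  loopless := by
    constructor
    intro a h
    match a with
    | none => exact h
    | some i => exact G.loopless.irrefl i h


namespace Stmt16Aux

instance (n : ℕ) : DecidableRel (compMM n).Adj :=
  fun i j => inferInstanceAs (Decidable ((i : ℕ) / 2 ≠ (j : ℕ) / 2))

instance (n : ℕ) (G : SimpleGraph (Fin n)) [DecidableRel G.Adj] :
    DecidableRel (coneG G).Adj := fun a b =>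
  match a, b with
  | none, none => .isFalse fun h => h
  | none, some _ => .isTrue trivial
  | some _, none => .isTrue trivial
  | some i, some j => inferInstanceAs (Decidable (G.Adj i j))

/-- The matching partner of `i`. -/
def pt {n : ℕ} (hn : n % 2 = 0) (i : Fin n) : Fin n :=
  if h : (i : ℕ) % 2 = 0 then ⟨i + 1, by have := i.2; omega⟩
  else ⟨i - 1, by have := i.2; omega⟩

lemma pt_val {n : ℕ} (hn : n % 2 = 0) (i : Fin n) :
    (pt hn i : ℕ) = if (i : ℕ) % 2 = 0 then (i : ℕ) + 1 else (i : ℕ) - 1 := by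
  unfold pt; split_ifs <;> rfl

lemma pt_ne {n : ℕ} (hn : n % 2 = 0) (i : Fin n) : pt hn i ≠ i := by
  intro hc
  have := congrArg Fin.val hc
  rw [pt_val] at this
  split_ifs at this <;> omega

lemma pt_pt {n : ℕ} (hn : n % 2 = 0) (i : Fin n) : pt hn (pt hn i) = i := by
  apply Fin.ext
  rw [pt_val, pt_val]
  split_ifs <;> omega

lemma div2_iff {n : ℕ} (hn : n % 2 = 0) (i j : Fin n) :
    (i : ℕ) / 2 = (j : ℕ) / 2 ↔ j = i ∨ j = pt hn i := by
  rw [Fin.ext_iff, Fin.ext_iff, pt_val]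
  split_ifs with h <;> omega

lemma deg_none (n : ℕ) : (coneG (compMM n)).degree none = n := by
  have h : (coneG (compMM n)).neighborFinset none
      = Finset.univ.map ⟨some, Option.some_injective _⟩ := by
    ext b
    cases b <;> simp only [SimpleGraph.mem_neighborFinset] <;> simp [coneG]
  rw [SimpleGraph.degree, h, Finset.card_map, Finset.card_univ, Fintype.card_fin]

lemma deg_compMM (n : ℕ) (hn : n % 2 = 0) (i : Fin n) :
    (compMM n).degree i = n - 2 := by
  have h : (compMM n).neighborFinset i = Finset.univ \ {i, pt hn i} := by
    ext j
    simp only [SimpleGraph.mem_neighborFinset]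
    simp only [SimpleGraph.mem_neighborFinset, compMM, Finset.mem_sdiff, Finset.mem_univ,
      Finset.mem_insert, Finset.mem_singleton, true_and]
    rw [not_or]
    constructor
    · intro hadj
      constructor <;> intro hc <;> exact hadj ((div2_iff hn i j).2 (by simp [hc]))
    · rintro ⟨h1, h2⟩ hc
      rcases (div2_iff hn i j).1 hc with h3 | h3
      · exact h1 h3
      · exact h2 h3
  rw [SimpleGraph.degree, h, Finset.card_sdiff_of_subset (by simp)]
  rw [Finset.card_univ, Fintype.card_fin,
    Finset.card_insert_of_notMem (by simp [(pt_ne hn i).symm]), Finset.card_singleton]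

lemma deg_some (n : ℕ) (hn : n % 2 = 0) (h2 : 2 ≤ n) (i : Fin n) :
    (coneG (compMM n)).degree (some i) = n - 1 := by
  have h : (coneG (compMM n)).neighborFinset (some i)
      = insert none (((compMM n).neighborFinset i).map ⟨some, Option.some_injective _⟩) := by
    ext b
    cases b <;> simp only [SimpleGraph.mem_neighborFinset] <;> simp [coneG]
  rw [SimpleGraph.degree, h, Finset.card_insert_of_notMem (by simp), Finset.card_map]
  rw [← SimpleGraph.degree, deg_compMM n hn i]
  omega

lemma edge_count (n : ℕ) (hn : n % 2 = 0) (h2 : 2 ≤ n) :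
    2 * (coneG (compMM n)).edgeSet.ncard = n ^ 2 := by
  have h1 : (coneG (compMM n)).edgeSet.ncard = (coneG (compMM n)).edgeFinset.card := by
    rw [← SimpleGraph.coe_edgeFinset, Set.ncard_coe_finset]
  rw [h1, ← SimpleGraph.sum_degrees_eq_twice_card_edges, Fintype.sum_option, deg_none]
  simp only [deg_some n hn h2]
  rw [Finset.sum_const, Finset.card_univ, Fintype.card_fin, smul_eq_mul]
  obtain ⟨m, rfl⟩ : ∃ m, n = m + 2 := ⟨n - 2, by omega⟩
  have hm : m + 2 - 1 = m + 1 := by omega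
  rw [hm]; ring

end Stmt16Aux

open Stmt16Aux in
theorem stmt_16 (r k : ℕ) (hr : 4 ≤ r) (hre : Even r) (hke : Even k)
    (hk : (r - 1) ^ 2 ≤ k) :
    VertexStable (starG r) k (coneG (compMM (r + k))) ∧
      2 * (coneG (compMM (r + k))).edgeSet.ncard = (r + k) ^ 2 := by
  have hre' := hre.two_dvd
  have hke' := hke.two_dvd
  have hn : (r + k) % 2 = 0 := by omega
  have hk9 : 9 ≤ k := by
    have h1 : 3 ≤ r - 1 := by omega
    calc 9 = 3 ^ 2 := rfl
      _ ≤ (r - 1) ^ 2 := Nat.pow_le_pow_left h1 2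
      _ ≤ k := hk
  constructor
  · intro F hF
    obtain ⟨S, hSdef⟩ : ∃ S : Finset (Fin (r + k)),
        S = Finset.univ.filter (fun i => some i ∉ F) := ⟨_, rfl⟩
    have memS : ∀ i, i ∈ S ↔ some i ∉ F := by intro i; simp [hSdef]
    have hsplit : S.card + (Finset.univ.filter (fun i : Fin (r + k) => ¬ some i ∉ F)).card
        = r + k := by
      rw [hSdef]
      have := Finset.card_filter_add_card_filter_not
        (s := (Finset.univ : Finset (Fin (r + k)))) (p := fun i => some i ∉ F)
      simpa using this
    have hF'le : (Finset.univ.filter (fun i : Fin (r + k) => ¬ some i ∉ F)).card ≤ k := by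
      calc (Finset.univ.filter (fun i : Fin (r + k) => ¬ some i ∉ F)).card
          ≤ F.card := by
            apply Finset.card_le_card_of_injOn some
            · intro i hi; simp at hi; exact hi
            · intro a _ b _ h; exact Option.some_injective _ h
        _ = k := hF
    by_cases hnone : none ∈ F
    · -- the cone vertex is deleted: find a star inside compMM
      have hF'eq : (Finset.univ.filter (fun i : Fin (r + k) => ¬ some i ∉ F)).card = k - 1 := by
        have heq : (Finset.univ.filter (fun i : Fin (r + k) => ¬ some i ∉ F)).card
            = (F.erase none).card := by
          apply Finset.card_bij (fun i _ => some i)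
          · intro i hi; simp at hi; simp [hi]
          · intro a _ b _ h; exact Option.some_injective _ h
          · intro b hb
            rw [Finset.mem_erase] at hb
            cases b with
            | none => exact absurd rfl hb.1
            | some j => exact ⟨j, by simp [hb.2], rfl⟩
        rw [heq, Finset.card_erase_of_mem hnone, hF]
      have hScard : S.card = r + 1 := by omega
      -- parity: some vertex of S has its partner outside S
      have hcenter : ∃ c ∈ S, pt hn c ∉ S := by
        by_contra hcon
        push_neg at hcon
        have hbij : (S.filter (fun i => i.val % 2 = 0)).card
            = (S.filter (fun i => ¬ i.val % 2 = 0)).card := by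
          apply Finset.card_bij' (fun i _ => pt hn i) (fun j _ => pt hn j)
          · intro i hi
            simp only [Finset.mem_filter] at hi ⊢
            refine ⟨hcon i hi.1, ?_⟩
            rw [pt_val, if_pos hi.2]
            omega
          · intro j hj
            simp only [Finset.mem_filter] at hj ⊢
            refine ⟨hcon j hj.1, ?_⟩
            rw [pt_val, if_neg hj.2]
            omega
          · intro i _; exact pt_pt hn i
          · intro j _; exact pt_pt hn j
        have hsum : (S.filter (fun i => i.val % 2 = 0)).card
            + (S.filter (fun i => ¬ i.val % 2 = 0)).card = S.card :=
          Finset.card_filter_add_card_filter_not _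
        omega
      obtain ⟨c, hcS, hcpt⟩ := hcenter
      have hTcard : (S.erase c).card = r := by
        rw [Finset.card_erase_of_mem hcS, hScard]
        omega
      let g : Fin r → Fin (r + k) :=
        fun a => ((S.erase c).equivFin.symm (Fin.cast hTcard.symm a) : _)
      have hgT : ∀ a, g a ∈ S.erase c :=
        fun a => ((S.erase c).equivFin.symm (Fin.cast hTcard.symm a)).2
      have hginj : Function.Injective g := by
        intro a b h
        exact Fin.cast_injective _ ((S.erase c).equivFin.symm.injective (Subtype.ext h))
      refine ⟨fun o => match o with | none => some c | some a => some (g a), ?_, ?_, ?_⟩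
      · intro a b h
        cases a with
        | none =>
          cases b with
          | none => rfl
          | some y =>
            have hcy : c = g y := Option.some_injective _ h
            exact absurd (hcy ▸ hgT y) (Finset.notMem_erase c S)
        | some x =>
          cases b with
          | none =>
            have hcy : g x = c := Option.some_injective _ h
            exact absurd (hcy ▸ hgT x) (Finset.notMem_erase c S)
          | some y =>
            rw [hginj (Option.some_injective _ h)]
      · intro a
        cases a with
        | none => exact (memS c).1 hcS
        | some a => exact (memS _).1 (Finset.mem_of_mem_erase (hgT a))
      · rintro a b (⟨hne, hor⟩ : a ≠ b ∧ (a = none ∨ b = none))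
        have hne2 : ∀ x : Fin r, (g x : ℕ) / 2 ≠ (c : ℕ) / 2 := by
          intro x hc
          have hgx := hgT x
          rw [Finset.mem_erase] at hgx
          rcases (div2_iff hn c (g x)).1 hc.symm with h3 | h3
          · exact hgx.1 h3
          · exact hcpt (h3 ▸ hgx.2)
        rcases hor with rfl | rfl
        · cases b with
          | none => exact absurd rfl hne
          | some x => exact fun hc => hne2 x hc.symm
        · cases a with
          | none => exact absurd rfl hne
          | some x => exact hne2 x
    · -- cone vertex survives: use it as the center
      have hScard : r ≤ S.card := by omega
      obtain ⟨T, hTS, hTcard⟩ := Finset.exists_subset_card_eq hScard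
      let g : Fin r → Fin (r + k) := fun a => (T.equivFin.symm (Fin.cast hTcard.symm a) : _)
      have hgT : ∀ a, g a ∈ T := fun a => (T.equivFin.symm (Fin.cast hTcard.symm a)).2
      have hginj : Function.Injective g := by
        intro a b h
        exact Fin.cast_injective _ (T.equivFin.symm.injective (Subtype.ext h))
      refine ⟨Option.map g, Option.map_injective hginj, ?_, ?_⟩
      · intro a
        cases a with
        | none => exact hnone
        | some a => exact (memS _).1 (hTS (hgT a))
      · rintro a b (⟨hne, hor⟩ : a ≠ b ∧ (a = none ∨ b = none))
        rcases hor with rfl | rfl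
        · cases b with
          | none => exact absurd rfl hne
          | some x => exact trivial
        · cases a with
          | none => exact absurd rfl hne
          | some x => exact trivial
  · exact edge_count (r + k) hn (by omega)
end

section
/- Let r ≥ 3 be odd, k ≥ 0, and G a graph of order r+k+1 that is (K_{1,r}; k)-vertex stable. Then G contains a vertex of degree r+k (i.e., a total vertex). -/
/-- A finset closed under a fixed-point-free involution has even cardinality. -/
lemma aux_even_card {α : Type*} [DecidableEq α] (m : α → α) :
    ∀ (T : Finset α), (∀ v ∈ T, m v ∈ T) → (∀ v ∈ T, m (m v) = v) → (∀ v ∈ T, m v ≠ v) →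
    Even T.card := by
  intro T
  induction T using Finset.strongInduction with
  | _ T ih =>
    intro hmem hinv hne
    rcases T.eq_empty_or_nonempty with rfl | ⟨v, hv⟩
    · simp
    · have hmv : m v ∈ T := hmem v hv
      have hvne : m v ≠ v := hne v hv
      have h1 : m v ∈ T.erase v := Finset.mem_erase.2 ⟨hvne, hmv⟩
      set T' := (T.erase v).erase (m v) with hT'
      have hsub' : T' ⊆ T := fun x hx =>
        Finset.mem_of_mem_erase (Finset.mem_of_mem_erase hx)
      have hssub : T' ⊂ T := by
        refine (Finset.ssubset_iff_of_subset hsub').2 ⟨v, hv, ?_⟩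
        simp [hT']
      have hT'mem : ∀ x ∈ T', x ∈ T ∧ x ≠ v ∧ x ≠ m v := by
        intro x hx
        have h2 := Finset.mem_erase.1 hx
        have h3 := Finset.mem_erase.1 h2.2
        exact ⟨h3.2, h3.1, h2.1⟩
      have hev : Even T'.card := by
        refine ih T' hssub ?_ ?_ ?_
        · intro x hx
          obtain ⟨hxT, hxv, hxmv⟩ := hT'mem x hx
          have hmx : m x ∈ T := hmem x hxT
          refine Finset.mem_erase.2 ⟨?_, Finset.mem_erase.2 ⟨?_, hmx⟩⟩
          · intro h; apply hxv; rw [← hinv x hxT, h, hinv v hv]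
          · intro h; apply hxmv; rw [← hinv x hxT, h]
        · intro x hx; exact hinv x (hT'mem x hx).1
        · intro x hx; exact hne x (hT'mem x hx).1
      have hc1 : T'.card + 1 = (T.erase v).card := Finset.card_erase_add_one h1
      have hc2 : (T.erase v).card + 1 = T.card := Finset.card_erase_add_one hv
      obtain ⟨c, hc⟩ := hev
      exact ⟨c + 1, by omega⟩

theorem stmt_19 {V : Type*} [Fintype V] (G : SimpleGraph V) (r k : ℕ)
    (hr : 3 ≤ r) (hro : Odd r) (hcard : Fintype.card V = r + k + 1)
    (hstab : VertexStable (starG r) k G) :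
    ∃ v : V, (G.neighborSet v).ncard = r + k := by
  classical
  -- Key property extracted from stability: for any k-set F, some c outside F has
  -- all its complement-neighbors inside F.
  have key : ∀ F : Finset V, F.card = k → ∃ c, c ∉ F ∧ ∀ u, Gᶜ.Adj c u → u ∈ F := by
    intro F hF
    obtain ⟨f, finj, favoid, fadj⟩ := hstab F hF
    refine ⟨f none, favoid none, ?_⟩
    intro u hadj
    by_contra hu
    have himg : Finset.univ.image f = Fᶜ := by
      apply Finset.eq_of_subset_of_card_le
      · intro x hx
        obtain ⟨a, _, rfl⟩ := Finset.mem_image.1 hx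
        simpa using favoid a
      · rw [Finset.card_compl, hF, Finset.card_image_of_injective _ finj,
          Finset.card_univ, Fintype.card_option, Fintype.card_fin, hcard]
        omega
    have hu' : u ∈ Finset.univ.image f := by
      rw [himg]; simpa using hu
    obtain ⟨a, _, rfl⟩ := Finset.mem_image.1 hu'
    match a with
    | none => exact hadj.ne rfl
    | some i =>
        have hGadj : G.Adj (f none) (f (some i)) :=
          fadj none (some i)
            (show (none : Option (Fin r)) ≠ some i ∧ ((none : Option (Fin r)) = none ∨ some i = none) from ⟨by simp, Or.inl rfl⟩)
        exact ((G.compl_adj _ _).1 hadj).2 hGadj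
  by_contra hno
  push_neg at hno
  -- no total vertex means the complement has min degree ≥ 1
  have hmin : ∀ v : V, ∃ u, Gᶜ.Adj v u := by
    intro v
    by_contra h
    push_neg at h
    apply hno v
    have hset : G.neighborSet v = {v}ᶜ := by
      ext u
      simp only [SimpleGraph.mem_neighborSet, Set.mem_compl_iff, Set.mem_singleton_iff]
      constructor
      · intro h' e; exact G.irrefl (e ▸ h')
      · intro hne
        by_contra hnadj
        exact h u ((G.compl_adj _ _).2 ⟨Ne.symm hne, hnadj⟩)
    rw [hset, Set.ncard_eq_toFinset_card']
    simp only [Set.toFinset_compl, Set.toFinset_singleton]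
    rw [Finset.card_compl, Finset.card_singleton, hcard]
    omega
  -- choose F0 maximizing the number of surviving complement-edges
  set A : Finset V → Finset (V × V) := fun F =>
    Finset.univ.filter (fun p => Gᶜ.Adj p.1 p.2 ∧ p.1 ∉ F ∧ p.2 ∉ F) with hA
  obtain ⟨F0, hF0mem, hF0max⟩ :=
    Finset.exists_max_image (Finset.powersetCard k (Finset.univ : Finset V))
      (fun F => (A F).card)
      (Finset.powersetCard_nonempty.2 (by rw [Finset.card_univ, hcard]; omega))
  have hF0card : F0.card = k := Finset.mem_powersetCard_univ.1 hF0mem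
  obtain ⟨c0, hc0F, hc0⟩ := key F0 hF0card
  set S := insert c0 F0 with hSdef
  -- S is closed in the complement graph
  have hSadj : ∀ s ∈ S, ∀ u, Gᶜ.Adj s u → u ∈ S := by
    intro s hs u hadj
    rcases Finset.mem_insert.1 hs with rfl | hsF0
    · exact Finset.mem_insert_of_mem (hc0 u hadj)
    · by_contra hu
      have huc0 : u ≠ c0 := fun e => hu (e ▸ Finset.mem_insert_self c0 F0)
      have huF0 : u ∉ F0 := fun h' => hu (Finset.mem_insert_of_mem h')
      set F1 := insert c0 (F0.erase s) with hF1
      have hF1card : F1.card = k := by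
        have h1 : c0 ∉ F0.erase s := fun h' => hc0F (Finset.mem_of_mem_erase h')
        rw [Finset.card_insert_of_notMem h1]
        have := Finset.card_erase_add_one hsF0
        omega
      have hmono : A F0 ⊆ A F1 := by
        intro p hp
        simp only [hA, Finset.mem_filter, Finset.mem_univ, true_and] at hp ⊢
        obtain ⟨hadj', h1, h2⟩ := hp
        refine ⟨hadj', ?_, ?_⟩
        · intro h'
          rcases Finset.mem_insert.1 h' with he | he
          · exact h2 (hc0 p.2 (he ▸ hadj'))
          · exact h1 (Finset.mem_of_mem_erase he)
        · intro h'
          rcases Finset.mem_insert.1 h' with he | he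
          · exact h1 (hc0 p.1 (he ▸ hadj'.symm))
          · exact h2 (Finset.mem_of_mem_erase he)
      have hnew1 : (s, u) ∈ A F1 := by
        simp only [hA, Finset.mem_filter, Finset.mem_univ, true_and]
        refine ⟨hadj, ?_, ?_⟩
        · intro h'
          rcases Finset.mem_insert.1 h' with he | he
          · exact hc0F (he ▸ hsF0)
          · exact (Finset.mem_erase.1 he).1 rfl
        · intro h'
          rcases Finset.mem_insert.1 h' with he | he
          · exact huc0 he
          · exact huF0 (Finset.mem_of_mem_erase he)
      have hnew2 : (s, u) ∉ A F0 := by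
        simp only [hA, Finset.mem_filter, Finset.mem_univ, true_and]
        intro h'
        exact h'.2.1 hsF0
      have hlt : (A F0).card < (A F1).card :=
        Finset.card_lt_card ((Finset.ssubset_iff_of_subset hmono).2 ⟨(s, u), hnew1, hnew2⟩)
      have := hF0max F1 (Finset.mem_powersetCard_univ.2 hF1card)
      omega
  obtain ⟨f1, hf1adj⟩ := hmin c0
  have hf1F0 : f1 ∈ F0 := hc0 f1 hf1adj
  set T := (Finset.univ : Finset V) \ S with hT
  have hTmem : ∀ v : V, v ∈ T ↔ v ∉ S := by intro v; simp [hT]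
  have hTnbr : ∀ v ∈ T, ∃ u ∈ T, Gᶜ.Adj v u := by
    intro v hv
    obtain ⟨u, hu⟩ := hmin v
    refine ⟨u, ?_, hu⟩
    rw [hTmem]
    intro huS
    exact (hTmem v).1 hv (hSadj u huS v hu.symm)
  have hScard : S.card = k + 1 := by
    rw [hSdef, Finset.card_insert_of_notMem hc0F, hF0card]
  have hTcard : T.card = r := by
    rw [hT, Finset.card_sdiff_of_subset (Finset.subset_univ S), Finset.card_univ, hcard, hScard]
    omega
  -- parity step: we can delete one vertex w from T keeping min degree ≥ 1 in T
  have hsubl : ∃ w ∈ T, ∀ v ∈ T, v ≠ w → ∃ u ∈ T, u ≠ w ∧ Gᶜ.Adj v u := by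
    by_contra hcon
    push_neg at hcon
    have hpend : ∀ w ∈ T, ∃ v, v ∈ T ∧ v ≠ w ∧ Gᶜ.Adj v w ∧
        ∀ u ∈ T, Gᶜ.Adj v u → u = w := by
      intro w hw
      obtain ⟨v, hvT, hvw, hv⟩ := hcon w hw
      obtain ⟨u, huT, hadj⟩ := hTnbr v hvT
      have huw : u = w := by
        by_contra h
        exact hv u huT h hadj
      refine ⟨v, hvT, hvw, huw ▸ hadj, ?_⟩
      intro u' hu'T hadj'
      by_contra h
      exact hv u' hu'T h hadj'
    let ψ : {x // x ∈ T} → {x // x ∈ T} := fun w =>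
      ⟨(hpend w.1 w.2).choose, (hpend w.1 w.2).choose_spec.1⟩
    have hψinj : Function.Injective ψ := by
      intro w1 w2 he
      have hch : (hpend w1.1 w1.2).choose = (hpend w2.1 w2.2).choose :=
        congrArg Subtype.val he
      have hadj1 := (hpend w1.1 w1.2).choose_spec.2.2.1
      have huniq2 := (hpend w2.1 w2.2).choose_spec.2.2.2
      have : w1.1 = w2.1 := huniq2 w1.1 w1.2 (hch ▸ hadj1)
      exact Subtype.ext this
    have hψsurj : Function.Surjective ψ := Finite.injective_iff_surjective.1 hψinj
    have hall : ∀ v ∈ T, ∃ w, w ∈ T ∧ Gᶜ.Adj v w ∧ ∀ u ∈ T, Gᶜ.Adj v u → u = w := by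
      intro v hv
      obtain ⟨w, hw⟩ := hψsurj ⟨v, hv⟩
      have hch : (hpend w.1 w.2).choose = v := congrArg Subtype.val hw
      have hspec := (hpend w.1 w.2).choose_spec
      rw [hch] at hspec
      exact ⟨w.1, w.2, hspec.2.2.1, hspec.2.2.2⟩
    let m : V → V := fun v =>
      if h : ∃ w, w ∈ T ∧ Gᶜ.Adj v w ∧ ∀ u ∈ T, Gᶜ.Adj v u → u = w then h.choose else v
    have hm : ∀ v ∈ T, m v ∈ T ∧ Gᶜ.Adj v (m v) ∧ ∀ u ∈ T, Gᶜ.Adj v u → u = m v := by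
      intro v hv
      have h := hall v hv
      simp only [m, dif_pos h]
      exact h.choose_spec
    have heven : Even T.card := by
      refine aux_even_card m T ?_ ?_ ?_
      · intro v hv; exact (hm v hv).1
      · intro v hv
        have h1 := hm v hv
        have h2 := hm (m v) h1.1
        exact (h2.2.2 v hv h1.2.1.symm).symm
      · intro v hv
        exact ((hm v hv).2.1).ne'
    rw [hTcard] at heven
    exact (Nat.not_even_iff_odd.2 hro) heven
  obtain ⟨w, hwT, hwgood⟩ := hsubl
  set F' := insert w (F0.erase f1) with hF'
  have hwS : w ∉ S := (hTmem w).1 hwT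
  have hF'card : F'.card = k := by
    have h1 : w ∉ F0.erase f1 := fun h =>
      hwS (Finset.mem_insert_of_mem (Finset.mem_of_mem_erase h))
    rw [Finset.card_insert_of_notMem h1]
    have := Finset.card_erase_add_one hf1F0
    omega
  obtain ⟨c', hc'F, hc'⟩ := key F' hF'card
  by_cases hc'S : c' ∈ S
  · rcases Finset.mem_insert.1 hc'S with rfl | hc'F0
    · -- c' = c0
      have hf1F' : f1 ∈ F' := hc' f1 hf1adj
      rcases Finset.mem_insert.1 hf1F' with he | he
      · exact hwS (he ▸ Finset.mem_insert_of_mem hf1F0)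
      · exact (Finset.mem_erase.1 he).1 rfl
    · -- c' ∈ F0, forced to be f1
      have hc'f1 : c' = f1 := by
        by_contra h
        exact hc'F (Finset.mem_insert_of_mem (Finset.mem_erase.2 ⟨h, hc'F0⟩))
      subst hc'f1
      have hc0F' : c0 ∈ F' := hc' c0 hf1adj.symm
      rcases Finset.mem_insert.1 hc0F' with he | he
      · exact hwS (he ▸ Finset.mem_insert_self c0 F0)
      · exact hc0F (Finset.mem_of_mem_erase he)
  · have hc'T : c' ∈ T := (hTmem c').2 hc'S
    by_cases hcw : c' = w
    · subst hcw
      obtain ⟨u, huT, hadj⟩ := hTnbr c' hc'T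
      have huF' : u ∈ F' := hc' u hadj
      rcases Finset.mem_insert.1 huF' with he | he
      · exact Gᶜ.irrefl (he ▸ hadj)
      · exact ((hTmem u).1 huT) (Finset.mem_insert_of_mem (Finset.mem_of_mem_erase he))
    · obtain ⟨u, huT, huw, hadj⟩ := hwgood c' hc'T hcw
      have huF' : u ∈ F' := hc' u hadj
      rcases Finset.mem_insert.1 huF' with he | he
      · exact huw he
      · exact ((hTmem u).1 huT) (Finset.mem_insert_of_mem (Finset.mem_of_mem_erase he))
end
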